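/- arXiv:0802.0012 — 5 statements merged into one kernel-verified Lean document; each statement's English description precedes it below -/
import Mathlib

section
/- For every fixed u ∈ H^m(ℝ), one has ‖A^λ u − L₀ u‖_{L²} → 0 as λ → 0+, and ‖A^λ u − (M + 1)u‖_{L²} → 0 as λ → +∞; that is, A^λ converges strongly to L₀ as λ → 0+ and strongly to M + 1 as λ → +∞. -/
open MeasureTheory Filter Set

noncomputable section

/-- An abstract realization of the Fourier–Plancherel transform on `L²(ℝ; ℂ)`:
a map on functions that is norm-preserving and linear on `L²` and agrees with the
usual Fourier integral on `L¹ ∩ L²` (hence is the standard `L²` Fourier transform). -/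
structure FourierL2 where
  toFun : (ℝ → ℂ) → ℝ → ℂ
  memLp : ∀ u : ℝ → ℂ, MemLp u 2 volume → MemLp (toFun u) 2 volume
  plancherel : ∀ u : ℝ → ℂ, MemLp u 2 volume →
    eLpNorm (toFun u) 2 volume = eLpNorm u 2 volume
  map_add : ∀ u v : ℝ → ℂ, MemLp u 2 volume → MemLp v 2 volume →
    toFun (u + v) =ᵐ[volume] toFun u + toFun v
  map_smul : ∀ (a : ℂ) (u : ℝ → ℂ), MemLp u 2 volume →
    toFun (a • u) =ᵐ[volume] a • toFun u
  agree : ∀ u : ℝ → ℂ, Integrable u volume → MemLp u 2 volume →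
    toFun u =ᵐ[volume] FourierTransform.fourier u

/-- Membership in the Sobolev space `H^m(ℝ) = {u ∈ L² : (1+|k|)^m û ∈ L²}`. -/
def HmMem (FT : FourierL2) (m : ℝ) (u : ℝ → ℂ) : Prop :=
  MemLp u 2 volume ∧ MemLp (fun k => ((1 + |k|) ^ m : ℝ) • FT.toFun u k) 2 volume

/-- The `L²` inner product. -/
def L2inner (u v : ℝ → ℂ) : ℂ := ∫ x : ℝ, u x * (starRingEnd ℂ) (v x)

/-- The `L²` norm. -/
def L2norm (u : ℝ → ℂ) : ℝ := (eLpNorm u 2 volume).toReal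

/-- `T` is the Fourier multiplier operator with symbol `β`, on the domain `D`. -/
def IsMult (FT : FourierL2) (β : ℝ → ℂ) (D : (ℝ → ℂ) → Prop)
    (T : (ℝ → ℂ) → ℝ → ℂ) : Prop :=
  ∀ u, D u → MemLp (T u) 2 volume ∧
    FT.toFun (T u) =ᵐ[volume] fun k => β k * FT.toFun u k

/-- The operator `L₀ = M + (1 - 1/c) - (1/c) f'(u_c)` for the BBM type equation. -/
def L0bbm (Mop : (ℝ → ℂ) → ℝ → ℂ) (f uc : ℝ → ℝ) (c : ℝ) (u : ℝ → ℂ) : ℝ → ℂ :=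
  fun x => Mop u x + (1 - 1/c : ℂ) * u x - (1/c : ℂ) * Complex.ofReal (deriv f (uc x)) * u x

/-- The operator `A^λ = M + 1 − (1/c)(1 − E^{λ,−})((1 + f'(u_c))·)` for the BBM type
equation, where `Em lam` is the Fourier multiplier with symbol `λ/(λ - ick)`. -/
def Abbm (Mop : (ℝ → ℂ) → ℝ → ℂ) (Em : ℝ → (ℝ → ℂ) → ℝ → ℂ)
    (f uc : ℝ → ℝ) (c lam : ℝ) (u : ℝ → ℂ) : ℝ → ℂ :=
  fun x => Mop u x + u x - (1/c : ℂ) *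
    (((1 + Complex.ofReal (deriv f (uc x))) * u x) -
      Em lam (fun y => (1 + Complex.ofReal (deriv f (uc y))) * u y) x)

open scoped ENNReal

/-- Key dominated-convergence lemma: if `σ i` are uniformly bounded multipliers tending to
zero pointwise a.e., then `‖σ i · g‖₂ → 0` for `g ∈ L²`. -/
lemma tendsto_eLpNorm_mul_zero {ι : Type*} {l : Filter ι} [l.IsCountablyGenerated]
    {g : ℝ → ℂ} (hg : MemLp g 2 volume) {σ : ι → ℝ → ℂ}
    (hσm : ∀ᶠ i in l, Measurable (σ i))
    (hσb : ∀ᶠ i in l, ∀ k, ‖σ i k‖ ≤ 1)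
    (hσ0 : ∀ᵐ k : ℝ ∂volume, Tendsto (fun i => σ i k) l (nhds 0)) :
    Tendsto (fun i => eLpNorm (fun k => σ i k * g k) 2 volume) l (nhds 0) := by
  set g' : ℝ → ℂ := hg.1.mk g with hg'def
  have hg'm : Measurable g' := hg.1.stronglyMeasurable_mk.measurable
  have hgg' : g =ᵐ[volume] g' := hg.1.ae_eq_mk
  have hg'L2 : eLpNorm g' 2 volume < ∞ := by
    rw [← eLpNorm_congr_ae hgg']; exact hg.2
  have hfin : ∫⁻ k, (‖g' k‖₊ : ℝ≥0∞) ^ (2 : ℝ) ∂volume ≠ ∞ := by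
    have := lintegral_rpow_enorm_lt_top_of_eLpNorm_lt_top (f := g') (p := 2)
      two_ne_zero ENNReal.ofNat_ne_top hg'L2
    simpa [enorm_eq_nnnorm] using this.ne
  have key : Tendsto (fun i => ∫⁻ k, (‖σ i k * g' k‖₊ : ℝ≥0∞) ^ (2 : ℝ) ∂volume) l (nhds 0) := by
    have h0 : (0 : ℝ≥0∞) = ∫⁻ _ : ℝ, (0 : ℝ≥0∞) ∂volume := by simp
    rw [h0]
    refine tendsto_lintegral_filter_of_dominated_convergence
      (fun k => (‖g' k‖₊ : ℝ≥0∞) ^ (2 : ℝ)) ?_ ?_ hfin ?_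
    · filter_upwards [hσm] with i hi
      exact (ENNReal.continuous_rpow_const.measurable).comp ((hi.mul hg'm).nnnorm.coe_nnreal_ennreal)
    · filter_upwards [hσb] with i hi
      refine Eventually.of_forall fun k => ?_
      refine ENNReal.rpow_le_rpow ?_ (by norm_num)
      refine ENNReal.coe_le_coe.mpr ?_
      rw [← NNReal.coe_le_coe]
      calc (‖σ i k * g' k‖ : ℝ) = ‖σ i k‖ * ‖g' k‖ := norm_mul _ _
        _ ≤ 1 * ‖g' k‖ := mul_le_mul_of_nonneg_right (hi k) (norm_nonneg _)
        _ = ‖g' k‖ := one_mul _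
    · filter_upwards [hσ0] with k hk
      have h1 : Tendsto (fun i => σ i k * g' k) l (nhds 0) := by
        simpa using hk.mul_const (g' k)
      have hcont : Continuous fun z : ℂ => (‖z‖₊ : ℝ≥0∞) ^ (2 : ℝ) :=
        ENNReal.continuous_rpow_const.comp (ENNReal.continuous_coe.comp continuous_nnnorm)
      have h2 := (hcont.tendsto 0).comp h1
      simpa only [Function.comp_def, nnnorm_zero, ENNReal.coe_zero,
        ENNReal.zero_rpow_of_pos (by norm_num : (0:ℝ) < 2)] using h2
  have h12 : Tendsto (fun i =>
      (∫⁻ k, (‖σ i k * g' k‖₊ : ℝ≥0∞) ^ (2 : ℝ) ∂volume) ^ (1/2 : ℝ)) l (nhds 0) := by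
    have h2 := ((ENNReal.continuous_rpow_const (y := (1/2:ℝ))).tendsto 0).comp key
    simpa only [Function.comp_def,
      ENNReal.zero_rpow_of_pos (by norm_num : (0:ℝ) < 1/2)] using h2
  refine h12.congr fun i => ?_
  rw [← eLpNorm_congr_ae (show (fun k => σ i k * g' k) =ᵐ[volume] fun k => σ i k * g k by
    filter_upwards [hgg'] with k hk; rw [hk]),
    eLpNorm_eq_lintegral_rpow_enorm_toReal two_ne_zero ENNReal.ofNat_ne_top]
  norm_num [enorm_eq_nnnorm]

lemma norm_den (lam c k : ℝ) :
    ‖(lam : ℂ) - Complex.I * c * k‖ = Real.sqrt (lam ^ 2 + (c * k) ^ 2) := by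
  rw [Complex.norm_def]
  congr 1
  simp [Complex.normSq_apply]
  ring

lemma abs_lam_le_norm_den (lam c k : ℝ) : |lam| ≤ ‖(lam : ℂ) - Complex.I * c * k‖ := by
  rw [norm_den, ← Real.sqrt_sq_eq_abs]
  exact Real.sqrt_le_sqrt (by nlinarith [sq_nonneg (c * k)])

lemma abs_ck_le_norm_den (lam c k : ℝ) : |c * k| ≤ ‖(lam : ℂ) - Complex.I * c * k‖ := by
  rw [norm_den, ← Real.sqrt_sq_eq_abs]
  exact Real.sqrt_le_sqrt (by nlinarith [sq_nonneg lam])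

/-- Corollary 2.2: for fixed `u ∈ H^m`, `A^λ u → L₀ u` in `L²` as `λ → 0+` and
`A^λ u → (M + 1)u` in `L²` as `λ → +∞`. -/
theorem A_lambda_strong_limits
    (m : ℝ) (hm : 1 ≤ m)
    (α : ℝ → ℝ) (a b C₀ K : ℝ)
    (ha : 0 < a) (hb : 0 < b) (hC₀ : 0 < C₀) (hK : 0 < K)
    (hα_nonneg : ∀ k, 0 ≤ α k) (hα_smooth : ContDiff ℝ 1 α)
    (hα_deriv : ∀ k, |deriv α k| ≤ C₀ * (1 + |k|) ^ (m - 1))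
    (hα_lower : ∀ k, K ≤ |k| → a * |k| ^ m ≤ α k)
    (hα_upper : ∀ k, K ≤ |k| → α k ≤ b * |k| ^ m)
    (FT : FourierL2)
    (Mop : (ℝ → ℂ) → ℝ → ℂ)
    (hM : IsMult FT (fun k => (α k : ℂ)) (HmMem FT m) Mop)
    (f : ℝ → ℝ) (hf : ContDiff ℝ 1 f) (hf0 : f 0 = 0) (hf'0 : deriv f 0 = 0)
    (c : ℝ) (hc : 1 < c)
    (uc : ℝ → ℝ) (huc_cont : Continuous uc)
    (huc_mem : HmMem FT m (fun x => (uc x : ℂ)))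
    (huc_decay : Tendsto uc (cocompact ℝ) (nhds 0))
    (huc_eq : (fun x => Mop (fun y => (uc y : ℂ)) x + (1 - 1/c : ℂ) * (uc x : ℂ)
        - (1/c : ℂ) * (f (uc x) : ℂ)) =ᵐ[volume] 0)
    (Em : ℝ → (ℝ → ℂ) → ℝ → ℂ)
    (hEm : ∀ lam : ℝ, 0 < lam → IsMult FT
        (fun k => (lam : ℂ) / (lam - Complex.I * c * k)) (fun u => MemLp u 2 volume) (Em lam))
    (u : ℝ → ℂ) (hu : HmMem FT m u) :
    Tendsto (fun lam => eLpNorm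
        (fun x => Abbm Mop Em f uc c lam u x - L0bbm Mop f uc c u x) 2 volume)
      (nhdsWithin (0 : ℝ) (Ioi (0 : ℝ))) (nhds 0) ∧
    Tendsto (fun lam => eLpNorm
        (fun x => Abbm Mop Em f uc c lam u x - (Mop u x + u x)) 2 volume)
      atTop (nhds 0) := by
  
  classical
  have hcpos : (0:ℝ) < c := lt_trans one_pos hc
  have hderiv_cont : Continuous (deriv f) := hf.continuous_deriv le_rfl
  -- boundedness of `1 + f'(u_c)`
  have h0 : Tendsto (fun x => deriv f (uc x)) (cocompact ℝ) (nhds 0) := by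
    have := (hderiv_cont.tendsto 0).comp huc_decay
    simpa [hf'0, Function.comp_def] using this
  obtain ⟨C, hC⟩ : ∃ C : ℝ, ∀ x, ‖(1 : ℂ) + Complex.ofReal (deriv f (uc x))‖ ≤ C := by
    have h1 : ∀ᶠ x in cocompact ℝ, |deriv f (uc x)| ≤ 1 := by
      have h2 := h0 (Metric.closedBall_mem_nhds (0:ℝ) one_pos)
      simpa [Metric.mem_closedBall, Real.dist_eq] using h2
    obtain ⟨S, hS, hSsub⟩ := mem_cocompact.mp h1
    obtain ⟨C', hC'⟩ := hS.exists_bound_of_continuousOn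
      ((hderiv_cont.comp huc_cont).continuousOn)
    refine ⟨1 + max 1 C', fun x => ?_⟩
    have hx : |deriv f (uc x)| ≤ max 1 C' := by
      by_cases hxS : x ∈ S
      · exact le_trans (by simpa [Real.norm_eq_abs] using hC' x hxS) (le_max_right _ _)
      · exact le_trans (hSsub hxS) (le_max_left _ _)
    calc ‖(1 : ℂ) + Complex.ofReal (deriv f (uc x))‖
        ≤ ‖(1 : ℂ)‖ + ‖Complex.ofReal (deriv f (uc x))‖ := norm_add_le _ _
      _ = 1 + |deriv f (uc x)| := by simp
      _ ≤ 1 + max 1 C' := by linarith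
  set w : ℝ → ℂ := fun y => (1 + Complex.ofReal (deriv f (uc y))) * u y with hw
  have hw_bound : ∀ x, ‖w x‖ ≤ C * ‖u x‖ := by
    intro x
    simp only [hw]
    rw [norm_mul]
    exact mul_le_mul_of_nonneg_right (hC x) (norm_nonneg _)
  have hw_mem : MemLp w 2 volume :=
    MemLp.of_le_mul hu.1
      ((continuous_const.add
        (Complex.continuous_ofReal.comp (hderiv_cont.comp huc_cont))).aestronglyMeasurable.mul
        hu.1.1)
      (Eventually.of_forall hw_bound)
  have hwFT : MemLp (FT.toFun w) 2 volume := FT.memLp w hw_mem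
  have hae : ∀ᵐ k : ℝ ∂volume, k ≠ 0 := by
    have hset : {k : ℝ | ¬ k ≠ 0} = {0} := by ext k; simp
    rw [ae_iff, hset]; exact measure_singleton 0
  have hden_ne : ∀ lam : ℝ, 0 < lam → ∀ k : ℝ,
      ((lam : ℂ) - Complex.I * c * k) ≠ 0 := by
    intro lam hlam k h
    have h2 : ((lam : ℂ) - Complex.I * ↑c * ↑k).re = lam := by simp
    rw [h] at h2
    simp only [Complex.zero_re] at h2
    linarith
  have hσmeas : ∀ lam : ℝ, Measurable
      (fun k : ℝ => (lam : ℂ) / ((lam : ℂ) - Complex.I * c * k)) := by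
    intro lam
    have hden : Measurable fun k : ℝ => ((lam : ℂ) - Complex.I * c * k) := by
      have : Measurable fun k : ℝ => (Complex.I * (c : ℂ)) * (k : ℂ) :=
        Complex.measurable_ofReal.const_mul _
      simpa [mul_assoc] using this.const_sub (lam : ℂ)
    exact measurable_const.div hden
  have hσb : ∀ lam k : ℝ, ‖(lam : ℂ) / ((lam : ℂ) - Complex.I * c * k)‖ ≤ 1 := by
    intro lam k
    rw [norm_div]
    rcases eq_or_ne ((lam : ℂ) - Complex.I * c * k) 0 with h | h
    · simp [h]
    · rw [div_le_one (norm_pos_iff.mpr h)]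
      calc ‖(lam : ℂ)‖ = |lam| := by simp
        _ ≤ _ := abs_lam_le_norm_den lam c k
  constructor
  · -- λ → 0⁺
    have heq : (fun lam => eLpNorm
          (fun x => Abbm Mop Em f uc c lam u x - L0bbm Mop f uc c u x) 2 volume)
        =ᶠ[nhdsWithin (0:ℝ) (Ioi 0)] fun lam => (‖(1/c : ℂ)‖₊ : ℝ≥0∞) *
          eLpNorm (fun k => ((lam : ℂ) / ((lam : ℂ) - Complex.I * c * k)) *
            FT.toFun w k) 2 volume := by
      filter_upwards [self_mem_nhdsWithin] with lam hlam
      obtain ⟨hE1, hE2⟩ := hEm lam hlam w hw_mem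
      have e1 : (fun x => Abbm Mop Em f uc c lam u x - L0bbm Mop f uc c u x)
          = (1/c : ℂ) • Em lam w := by
        funext x
        simp only [hw, Abbm, L0bbm, Pi.smul_apply, smul_eq_mul]
        ring
      rw [e1, eLpNorm_const_smul]
      congr 1
      rw [← FT.plancherel _ hE1]
      exact eLpNorm_congr_ae hE2
    rw [tendsto_congr' heq]
    have hmain : Tendsto (fun lam : ℝ => eLpNorm
        (fun k : ℝ => ((lam : ℂ) / ((lam : ℂ) - Complex.I * c * k)) * FT.toFun w k) 2 volume)
        (nhdsWithin (0:ℝ) (Ioi 0)) (nhds 0) := by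
      refine tendsto_eLpNorm_mul_zero hwFT (Eventually.of_forall hσmeas)
        (Eventually.of_forall fun lam => hσb lam) ?_
      filter_upwards [hae] with k hk
      have hnum : Tendsto (fun lam : ℝ => (lam : ℂ)) (nhdsWithin (0:ℝ) (Ioi 0))
          (nhds 0) := by
        have := (Complex.continuous_ofReal.tendsto 0).mono_left
          (nhdsWithin_le_nhds (s := Ioi (0:ℝ)))
        simpa using this
      have hden : Tendsto (fun lam : ℝ => (lam : ℂ) - Complex.I * c * k)
          (nhdsWithin (0:ℝ) (Ioi 0)) (nhds ((0:ℂ) - Complex.I * c * k)) :=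
        hnum.sub tendsto_const_nhds
      have hne : ((0:ℂ) - Complex.I * c * k) ≠ 0 := by
        simp only [zero_sub, neg_ne_zero]
        exact mul_ne_zero (mul_ne_zero Complex.I_ne_zero
          (by exact_mod_cast hcpos.ne')) (by exact_mod_cast hk)
      have := hnum.div hden hne
      simpa [Pi.div_def] using this
    have := ENNReal.Tendsto.const_mul (a := (‖(1/c : ℂ)‖₊ : ℝ≥0∞)) hmain
      (Or.inr ENNReal.coe_ne_top)
    simpa using this
  · -- λ → ∞
    have heq : (fun lam => eLpNorm
          (fun x => Abbm Mop Em f uc c lam u x - (Mop u x + u x)) 2 volume)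
        =ᶠ[atTop] fun lam => (‖(1/c : ℂ)‖₊ : ℝ≥0∞) *
          eLpNorm (fun k => ((lam : ℂ) / ((lam : ℂ) - Complex.I * c * k) - 1) *
            FT.toFun w k) 2 volume := by
      filter_upwards [eventually_gt_atTop 0] with lam hlam
      obtain ⟨hE1, hE2⟩ := hEm lam hlam w hw_mem
      have e2 : (fun x => Abbm Mop Em f uc c lam u x - (Mop u x + u x))
          = (1/c : ℂ) • (fun x => Em lam w x - w x) := by
        funext x
        simp only [hw, Abbm, Pi.smul_apply, smul_eq_mul]
        ring
      rw [e2, eLpNorm_const_smul]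
      congr 1
      have hsub_mem : MemLp (fun x => Em lam w x - w x) 2 volume := hE1.sub hw_mem
      rw [← FT.plancherel _ hsub_mem]
      have hfun : (fun x => Em lam w x - w x) = Em lam w + (-1 : ℂ) • w := by
        funext x; simp [sub_eq_add_neg]
      have h1 := FT.map_add (Em lam w) ((-1 : ℂ) • w) hE1 (hw_mem.const_smul (-1 : ℂ))
      have h2 := FT.map_smul (-1 : ℂ) w hw_mem
      refine eLpNorm_congr_ae ?_
      rw [hfun]
      filter_upwards [h1, h2, hE2] with k hk1 hk2 hk3
      simp only [Pi.add_apply, Pi.smul_apply, smul_eq_mul] at hk1 hk2 ⊢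
      rw [hk1, hk2, hk3]
      ring
    rw [tendsto_congr' heq]
    have hmain : Tendsto (fun lam : ℝ => eLpNorm
        (fun k : ℝ => ((lam : ℂ) / ((lam : ℂ) - Complex.I * c * k) - 1) * FT.toFun w k)
        2 volume) atTop (nhds 0) := by
      refine tendsto_eLpNorm_mul_zero hwFT
        (Eventually.of_forall fun lam => (hσmeas lam).sub measurable_const) ?_ ?_
      · filter_upwards [eventually_gt_atTop 0] with lam hlam k
        have hz := hden_ne lam hlam k
        rw [div_sub_one hz, show (lam : ℂ) - ((lam : ℂ) - Complex.I * c * k)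
            = Complex.I * c * k from by ring, norm_div]
        rw [div_le_one (norm_pos_iff.mpr hz)]
        calc ‖Complex.I * (c:ℂ) * (k:ℂ)‖ = |c * k| := by
              simp [norm_mul, abs_mul]
          _ ≤ _ := abs_ck_le_norm_den lam c k
      · filter_upwards [hae] with k hk
        refine squeeze_zero_norm' ?_
          (tendsto_const_nhds.div_atTop (f := fun _ : ℝ => |c * k|) tendsto_id)
        filter_upwards [eventually_gt_atTop 0] with lam hlam
        have hz := hden_ne lam hlam k
        rw [div_sub_one hz, show (lam : ℂ) - ((lam : ℂ) - Complex.I * c * k)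
            = Complex.I * c * k from by ring, norm_div]
        have hnum : ‖Complex.I * (c:ℂ) * (k:ℂ)‖ = |c * k| := by
          simp [norm_mul, abs_mul]
        rw [hnum]
        have hlow : lam ≤ ‖(lam : ℂ) - Complex.I * c * k‖ := by
          have := abs_lam_le_norm_den lam c k
          rwa [abs_of_pos hlam] at this
        exact div_le_div_of_nonneg_left (abs_nonneg _) hlam hlow
    have := ENNReal.Tendsto.const_mul (a := (‖(1/c : ℂ)‖₊ : ℝ≥0∞)) hmain
      (Or.inr ENNReal.coe_ne_top)
    simpa using this
end
end

section
/- Fix λ > 0 and a complex number z with Re z < ½(1 − 1/c). Then there exists N such that for every n ≥ N and every u ∈ H^m(ℝ) with ‖u‖_{L²} = 1 and support contained in {x : |x| ≥ n}, one has Re((A^λ − z)u, u)_{L²} ≥ ¼(1 − 1/c). -/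
open MeasureTheory Filter Set

noncomputable section

section Helpers

lemma FT_comb (FT : FourierL2) {u v : ℝ → ℂ} (hu : MemLp u 2 volume)
    (hv : MemLp v 2 volume) (a : ℂ) :
    FT.toFun (u + a • v) =ᵐ[volume] FT.toFun u + a • FT.toFun v := by
  filter_upwards [FT.map_add u (a • v) hu (hv.const_smul a), FT.map_smul a v hv] with x h1 h2
  simp only [Pi.add_apply, Pi.smul_apply] at *
  rw [h1, h2]

lemma eLpNorm_FT_comb (FT : FourierL2) {u v : ℝ → ℂ} (hu : MemLp u 2 volume)
    (hv : MemLp v 2 volume) (a : ℂ) :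
    eLpNorm (FT.toFun u + a • FT.toFun v) 2 volume = eLpNorm (u + a • v) 2 volume := by
  rw [← eLpNorm_congr_ae (FT_comb FT hu hv a), FT.plancherel _ (hu.add (hv.const_smul a))]

lemma L2inner_eq_inner {u v : ℝ → ℂ} (hu : MemLp u 2 volume) (hv : MemLp v 2 volume) :
    L2inner u v = @inner ℂ _ _ (hv.toLp v) (hu.toLp u) := by
  rw [L2.inner_def]
  refine integral_congr_ae ?_
  filter_upwards [hu.coeFn_toLp, hv.coeFn_toLp] with x h1 h2
  rw [h1, h2, RCLike.inner_apply, mul_comm]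

lemma integrable_mul_conj {u v : ℝ → ℂ} (hu : MemLp u 2 volume) (hv : MemLp v 2 volume) :
    Integrable (fun x => u x * (starRingEnd ℂ) (v x)) volume := by
  have h := L2.integrable_inner (𝕜 := ℂ) (hv.toLp v) (hu.toLp u)
  refine h.congr ?_
  filter_upwards [hu.coeFn_toLp, hv.coeFn_toLp] with x h1 h2
  rw [RCLike.inner_apply, h1, h2, mul_comm]

lemma L2inner_norm_le {u v : ℝ → ℂ} (hu : MemLp u 2 volume) (hv : MemLp v 2 volume) :
    ‖L2inner u v‖ ≤ (eLpNorm u 2 volume).toReal * (eLpNorm v 2 volume).toReal := by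
  rw [L2inner_eq_inner hu hv]
  calc ‖_‖ ≤ ‖hv.toLp v‖ * ‖hu.toLp u‖ := norm_inner_le_norm _ _
  _ = _ := by rw [Lp.norm_toLp, Lp.norm_toLp, mul_comm]

lemma L2inner_self {u : ℝ → ℂ} (hu : MemLp u 2 volume) :
    L2inner u u = ((eLpNorm u 2 volume).toReal : ℂ) ^ 2 := by
  rw [L2inner_eq_inner hu hu, inner_self_eq_norm_sq_to_K, Lp.norm_toLp]
  norm_cast


lemma parseval (FT : FourierL2) {u v : ℝ → ℂ} (hu : MemLp u 2 volume)
    (hv : MemLp v 2 volume) :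
    L2inner (FT.toFun u) (FT.toFun v) = L2inner u v := by
  rw [L2inner_eq_inner (FT.memLp u hu) (FT.memLp v hv), L2inner_eq_inner hu hv]
  have key : ∀ a : ℂ, ‖(FT.memLp v hv).toLp (FT.toFun v) + a • (FT.memLp u hu).toLp (FT.toFun u)‖
      = ‖hv.toLp v + a • hu.toLp u‖ := by
    intro a
    have e1 : ((FT.memLp v hv).add ((FT.memLp u hu).const_smul a)).toLp
        (FT.toFun v + a • FT.toFun u)
        = (FT.memLp v hv).toLp (FT.toFun v) + a • (FT.memLp u hu).toLp (FT.toFun u) := by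
      rw [MemLp.toLp_add (FT.memLp v hv) ((FT.memLp u hu).const_smul a), MemLp.toLp_const_smul]
    have e2 : (hv.add (hu.const_smul a)).toLp (v + a • u)
        = hv.toLp v + a • hu.toLp u := by
      rw [MemLp.toLp_add hv (hu.const_smul a), MemLp.toLp_const_smul]
    rw [← e1, ← e2, Lp.norm_toLp, Lp.norm_toLp, eLpNorm_FT_comb FT hv hu a]
  have key2 : ∀ a : ℂ, ‖(FT.memLp v hv).toLp (FT.toFun v) - a • (FT.memLp u hu).toLp (FT.toFun u)‖
      = ‖hv.toLp v - a • hu.toLp u‖ := by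
    intro a
    have := key (-a)
    simpa [neg_smul, sub_eq_add_neg] using this
  rw [inner_eq_sum_norm_sq_div_four, inner_eq_sum_norm_sq_div_four]
  have k1 := key 1
  have k2 := key2 1
  simp only [one_smul] at k1 k2
  rw [k1, k2, key2 RCLike.I, key RCLike.I]

lemma mult_re_nonneg (FT : FourierL2) {β : ℝ → ℂ} {D : (ℝ → ℂ) → Prop}
    {T : (ℝ → ℂ) → ℝ → ℂ} (hT : IsMult FT β D T) {u : ℝ → ℂ} (hD : D u)
    (hu : MemLp u 2 volume) (hβ : ∀ k, 0 ≤ (β k).re) :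
    0 ≤ (L2inner (T u) u).re := by
  obtain ⟨hTu, hF⟩ := hT u hD
  rw [← parseval FT hTu hu]
  have hae : (fun k => FT.toFun (T u) k * (starRingEnd ℂ) (FT.toFun u k))
      =ᵐ[volume] fun k => β k * ((Complex.normSq (FT.toFun u k) : ℝ) : ℂ) := by
    filter_upwards [hF] with k hk
    rw [hk, mul_assoc, Complex.mul_conj]
  have hInt : Integrable (fun k => β k * ((Complex.normSq (FT.toFun u k) : ℝ) : ℂ)) volume :=
    (integrable_mul_conj (FT.memLp _ hTu) (FT.memLp _ hu)).congr hae
  have h2 := integral_re (μ := volume) hInt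
  simp only [RCLike.re_to_complex] at h2
  rw [L2inner, integral_congr_ae hae, ← h2]
  apply integral_nonneg
  intro k
  simp only [Pi.zero_apply, Complex.mul_re, Complex.ofReal_re, Complex.ofReal_im, mul_zero,
    sub_zero]
  exact mul_nonneg (hβ k) (Complex.normSq_nonneg _)

lemma mult_add (FT : FourierL2) {β : ℝ → ℂ} {T : (ℝ → ℂ) → ℝ → ℂ}
    (hT : IsMult FT β (fun u => MemLp u 2 volume) T)
    {u v : ℝ → ℂ} (hu : MemLp u 2 volume) (hv : MemLp v 2 volume) :
    T (u + v) =ᵐ[volume] T u + T v := by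
  obtain ⟨huv', hFuv⟩ := hT (u + v) (hu.add hv)
  obtain ⟨hu', hFu⟩ := hT u hu
  obtain ⟨hv', hFv⟩ := hT v hv
  have hdmem : MemLp (T (u + v) - (T u + T v)) 2 volume := huv'.sub (hu'.add hv')
  have hFd : FT.toFun (T (u + v) - (T u + T v)) =ᵐ[volume] (0 : ℝ → ℂ) := by
    have h0 : T (u + v) - (T u + T v) = T (u + v) + (-1 : ℂ) • (T u + T v) := by
      funext x; simp [sub_eq_add_neg]; ring
    rw [h0]
    have h1 := FT_comb FT huv' (hu'.add hv') (-1)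
    refine h1.trans ?_
    filter_upwards [hFuv, FT.map_add (T u) (T v) hu' hv', hFu, hFv,
      FT.map_add u v hu hv] with k e1 e2 e3 e4 e5
    simp only [Pi.add_apply, Pi.smul_apply, Pi.zero_apply, smul_eq_mul] at *
    rw [e1, e2, e3, e4, e5]
    ring
  have hz : eLpNorm (T (u + v) - (T u + T v)) 2 volume = 0 := by
    rw [← FT.plancherel _ hdmem, eLpNorm_congr_ae hFd, eLpNorm_zero]
  have hd0 := (eLpNorm_eq_zero_iff hdmem.aestronglyMeasurable (by norm_num)).mp hz
  filter_upwards [hd0] with x hx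
  have hx' : T (u + v) x - (T u x + T v x) = 0 := hx
  have := sub_eq_zero.mp hx'
  simpa using this


lemma bounded_of_tendsto {φ : ℝ → ℝ} (hc : Continuous φ)
    (ht : Tendsto φ (cocompact ℝ) (nhds 0)) : ∃ B : ℝ, ∀ x, |φ x| ≤ B := by
  have h1 : φ ⁻¹' Metric.ball 0 1 ∈ cocompact ℝ := ht (Metric.ball_mem_nhds 0 one_pos)
  rw [mem_cocompact] at h1
  obtain ⟨s, hs, hsub⟩ := h1
  obtain ⟨C, hC⟩ := hs.exists_bound_of_continuousOn hc.continuousOn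
  refine ⟨max C 1, fun x => ?_⟩
  by_cases hx : x ∈ s
  · exact le_trans (hC x hx) (le_max_left _ _)
  · have := hsub hx
    simp only [mem_preimage, Metric.mem_ball, Real.dist_eq, sub_zero] at this
    exact le_trans this.le (le_max_right _ _)

lemma eventually_small {φ : ℝ → ℝ} (ht : Tendsto φ (cocompact ℝ) (nhds 0))
    {ε : ℝ} (hε : 0 < ε) : ∃ N : ℕ, ∀ x : ℝ, (N : ℝ) ≤ |x| → |φ x| ≤ ε := by
  have h1 : φ ⁻¹' Metric.ball 0 ε ∈ cocompact ℝ := ht (Metric.ball_mem_nhds 0 hε)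
  rw [mem_cocompact] at h1
  obtain ⟨s, hs, hsub⟩ := h1
  obtain ⟨r, hr⟩ := hs.isBounded.subset_closedBall 0
  refine ⟨⌈r⌉₊ + 1, fun x hx => ?_⟩
  have hxs : x ∉ s := by
    intro hxs
    have h2 := hr hxs
    rw [Metric.mem_closedBall, Real.dist_eq, sub_zero] at h2
    push_cast at hx
    have := Nat.le_ceil r
    linarith
  have := hsub hxs
  simp only [mem_preimage, Metric.mem_ball, Real.dist_eq, sub_zero] at this
  exact this.le

end Helpers
/-- Lemma 2.4: for `Re z < ½(1 - 1/c)` and `u` of unit `L²` norm supported in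
`{|x| ≥ n}` with `n` large, `Re ((A^λ - z)u, u) ≥ ¼(1 - 1/c)`. -/
theorem A_lambda_quadratic_tail_bound
    (m : ℝ) (hm : 1 ≤ m)
    (α : ℝ → ℝ) (a b C₀ K : ℝ)
    (ha : 0 < a) (hb : 0 < b) (hC₀ : 0 < C₀) (hK : 0 < K)
    (hα_nonneg : ∀ k, 0 ≤ α k) (hα_smooth : ContDiff ℝ 1 α)
    (hα_deriv : ∀ k, |deriv α k| ≤ C₀ * (1 + |k|) ^ (m - 1))
    (hα_lower : ∀ k, K ≤ |k| → a * |k| ^ m ≤ α k)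
    (hα_upper : ∀ k, K ≤ |k| → α k ≤ b * |k| ^ m)
    (FT : FourierL2)
    (Mop : (ℝ → ℂ) → ℝ → ℂ)
    (hM : IsMult FT (fun k => (α k : ℂ)) (HmMem FT m) Mop)
    (f : ℝ → ℝ) (hf : ContDiff ℝ 1 f) (hf0 : f 0 = 0) (hf'0 : deriv f 0 = 0)
    (c : ℝ) (hc : 1 < c)
    (uc : ℝ → ℝ) (huc_cont : Continuous uc)
    (huc_mem : HmMem FT m (fun x => (uc x : ℂ)))
    (huc_decay : Tendsto uc (cocompact ℝ) (nhds 0))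
    (huc_eq : (fun x => Mop (fun y => (uc y : ℂ)) x + (1 - 1/c : ℂ) * (uc x : ℂ)
        - (1/c : ℂ) * (f (uc x) : ℂ)) =ᵐ[volume] 0)
    (Em : ℝ → (ℝ → ℂ) → ℝ → ℂ)
    (hEm : ∀ lam : ℝ, 0 < lam → IsMult FT
        (fun k => (lam : ℂ) / (lam - Complex.I * c * k)) (fun u => MemLp u 2 volume) (Em lam))
    (lam : ℝ) (hlam : 0 < lam)
    (z : ℂ) (hz : z.re < (1/2) * (1 - 1/c)) :
    ∃ N : ℕ, ∀ n : ℕ, N ≤ n → ∀ u : ℝ → ℂ, HmMem FT m u →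
      eLpNorm u 2 volume = 1 → Function.support u ⊆ {x : ℝ | (n : ℝ) ≤ |x|} →
      (1/4) * (1 - 1/c) ≤
        (L2inner (fun x => Abbm Mop Em f uc c lam u x - z * u x) u).re := by
  have hc0 : (0:ℝ) < c := by linarith
  have hder : Continuous (deriv f) := hf.continuous_deriv le_rfl
  have hφc : Continuous (fun x => deriv f (uc x)) := hder.comp huc_cont
  have hφt : Tendsto (fun x => deriv f (uc x)) (cocompact ℝ) (nhds 0) := by
    have h := (hder.tendsto 0).comp huc_decay
    rwa [hf'0] at h
  obtain ⟨B, hB⟩ := bounded_of_tendsto hφc hφt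
  set ε : ℝ := (c - 1) / 8 with hεdef
  have hε : 0 < ε := by rw [hεdef]; linarith
  obtain ⟨N, hN⟩ := eventually_small hφt hε
  refine ⟨N, fun n hn u hu hnorm hsupp => ?_⟩
  have hu1 : MemLp u 2 volume := hu.1
  have hMu : MemLp (Mop u) 2 volume := (hM u hu).1
  set g : ℝ → ℂ := fun y => Complex.ofReal (deriv f (uc y)) * u y with hgdef
  set w : ℝ → ℂ := fun y => (1 + Complex.ofReal (deriv f (uc y))) * u y with hwdef
  have hg2 : MemLp g 2 volume := by
    refine hu1.of_le_mul (c := B)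
      ((Complex.continuous_ofReal.comp hφc).aestronglyMeasurable.mul hu1.aestronglyMeasurable)
      (Filter.Eventually.of_forall fun x => ?_)
    simp only [hgdef, norm_mul, Complex.norm_real, Real.norm_eq_abs]
    exact mul_le_mul_of_nonneg_right (hB x) (norm_nonneg _)
  have hw2 : MemLp w 2 volume := by
    refine hu1.of_le_mul (c := 1 + B)
      (((continuous_const.add (Complex.continuous_ofReal.comp hφc)).aestronglyMeasurable).mul
        hu1.aestronglyMeasurable)
      (Filter.Eventually.of_forall fun x => ?_)
    simp only [hwdef, norm_mul]
    refine mul_le_mul_of_nonneg_right ?_ (norm_nonneg _)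
    calc ‖1 + (Complex.ofReal (deriv f (uc x)))‖
        ≤ ‖(1:ℂ)‖ + ‖(Complex.ofReal (deriv f (uc x)))‖ := norm_add_le _ _
    _ ≤ 1 + B := by
        simp only [norm_one, Complex.norm_real, Real.norm_eq_abs]
        linarith [hB x]
  have hEw : MemLp (Em lam w) 2 volume := ((hEm lam hlam) w hw2).1
  have hEu : MemLp (Em lam u) 2 volume := ((hEm lam hlam) u hu1).1
  have hEg : MemLp (Em lam g) 2 volume := ((hEm lam hlam) g hg2).1
  have i1 := integrable_mul_conj hMu hu1
  have i2 := integrable_mul_conj hu1 hu1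
  have i3 := integrable_mul_conj hw2 hu1
  have i4 := integrable_mul_conj hEw hu1
  have ig := integrable_mul_conj hg2 hu1
  have iEu := integrable_mul_conj hEu hu1
  have iEg := integrable_mul_conj hEg hu1
  have huu : L2inner u u = 1 := by
    rw [L2inner_self hu1, hnorm]; norm_num
  have splitted : L2inner (fun x => Abbm Mop Em f uc c lam u x - z * u x) u
      = L2inner (Mop u) u + L2inner u u - (1/(c:ℂ)) * L2inner w u
        + (1/(c:ℂ)) * L2inner (Em lam w) u - z * L2inner u u := by
    have e1 : L2inner (Mop u) u + L2inner u u - (1/(c:ℂ)) * L2inner w u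
        + (1/(c:ℂ)) * L2inner (Em lam w) u - z * L2inner u u
        = ∫ x, (Mop u x * (starRingEnd ℂ) (u x) + u x * (starRingEnd ℂ) (u x)
            - (1/(c:ℂ)) * (w x * (starRingEnd ℂ) (u x))
            + (1/(c:ℂ)) * (Em lam w x * (starRingEnd ℂ) (u x))
            - z * (u x * (starRingEnd ℂ) (u x))) := by
      have i3' : Integrable (fun x => (1/(c:ℂ)) * (w x * (starRingEnd ℂ) (u x))) volume :=
        i3.const_mul _
      have i4' : Integrable (fun x => (1/(c:ℂ)) * (Em lam w x * (starRingEnd ℂ) (u x))) volume :=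
        i4.const_mul _
      have i2' : Integrable (fun x => z * (u x * (starRingEnd ℂ) (u x))) volume :=
        i2.const_mul _
      have i12 : Integrable (fun x => Mop u x * (starRingEnd ℂ) (u x)
          + u x * (starRingEnd ℂ) (u x)) volume := i1.add i2
      have i123 : Integrable (fun x => Mop u x * (starRingEnd ℂ) (u x)
          + u x * (starRingEnd ℂ) (u x)
          - (1/(c:ℂ)) * (w x * (starRingEnd ℂ) (u x))) volume := i12.sub i3'
      have i1234 : Integrable (fun x => Mop u x * (starRingEnd ℂ) (u x)
          + u x * (starRingEnd ℂ) (u x)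
          - (1/(c:ℂ)) * (w x * (starRingEnd ℂ) (u x))
          + (1/(c:ℂ)) * (Em lam w x * (starRingEnd ℂ) (u x))) volume := i123.add i4'
      simp only [L2inner]
      rw [← integral_const_mul, ← integral_const_mul, ← integral_const_mul,
          ← integral_add i1 i2, ← integral_sub i12 i3', ← integral_add i123 i4',
          ← integral_sub i1234 i2']
    rw [e1]
    simp only [L2inner, Abbm]
    refine integral_congr_ae (Filter.Eventually.of_forall fun x => ?_)
    simp only [hwdef]
    ring
  have hwsplit : L2inner w u = L2inner u u + L2inner g u := by
    simp only [L2inner]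
    rw [← integral_add i2 ig]
    refine integral_congr_ae (Filter.Eventually.of_forall fun x => ?_)
    simp only [hwdef, hgdef]; ring
  have hwg : w = u + g := by
    funext x; simp only [hwdef, hgdef, Pi.add_apply]; ring
  have hEsplit : Em lam w =ᵐ[volume] Em lam u + Em lam g := by
    rw [hwg]; exact mult_add FT (hEm lam hlam) hu1 hg2
  have hEwsplit : L2inner (Em lam w) u
      = L2inner (Em lam u) u + L2inner (Em lam g) u := by
    simp only [L2inner]
    rw [← integral_add iEu iEg]
    refine integral_congr_ae ?_
    filter_upwards [hEsplit] with x hx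
    rw [hx]
    simp only [Pi.add_apply]; ring
  have key : L2inner (fun x => Abbm Mop Em f uc c lam u x - z * u x) u
      = L2inner (Mop u) u + 1 - (1/(c:ℂ)) * (1 + L2inner g u)
        + (1/(c:ℂ)) * (L2inner (Em lam u) u + L2inner (Em lam g) u) - z := by
    rw [splitted, hwsplit, hEwsplit, huu]; ring
  have hco : (1/(c:ℂ)) = (((1/c : ℝ)) : ℂ) := by norm_cast
  have hre : (L2inner (fun x => Abbm Mop Em f uc c lam u x - z * u x) u).re
      = (L2inner (Mop u) u).re + 1 - (1/c) * (1 + (L2inner g u).re)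
        + (1/c) * ((L2inner (Em lam u) u).re + (L2inner (Em lam g) u).re) - z.re := by
    rw [key, hco]
    simp [Complex.add_re, Complex.sub_re, Complex.one_re, Complex.re_ofReal_mul]
  have hr1 : 0 ≤ (L2inner (Mop u) u).re :=
    mult_re_nonneg FT hM hu hu1 (fun k => by simpa using hα_nonneg k)
  have hr4 : 0 ≤ (L2inner (Em lam u) u).re := by
    refine mult_re_nonneg FT (hEm lam hlam) hu1 hu1 (fun k => ?_)
    simp only [Complex.div_re, Complex.sub_re, Complex.sub_im, Complex.mul_re, Complex.mul_im,
      Complex.I_re, Complex.I_im, Complex.ofReal_re, Complex.ofReal_im]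
    ring_nf
    exact mul_nonneg (sq_nonneg lam) (inv_nonneg.mpr (Complex.normSq_nonneg _))
  have hεsupp : ∀ x, u x ≠ 0 → |deriv f (uc x)| ≤ ε := by
    intro x hx
    have hxn : (n:ℝ) ≤ |x| := hsupp hx
    have hNn : (N:ℝ) ≤ (n:ℝ) := Nat.cast_le.mpr hn
    exact hN x (by linarith)
  have hgpt : ∀ x, ‖g x‖ ≤ ε * ‖u x‖ := by
    intro x
    by_cases hx : u x = 0
    · simp [hgdef, hx]
    · simp only [hgdef, norm_mul, Complex.norm_real, Real.norm_eq_abs]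
      exact mul_le_mul_of_nonneg_right (hεsupp x hx) (norm_nonneg _)
  have hgnorm : (eLpNorm g 2 volume).toReal ≤ ε := by
    have h1 : eLpNorm g 2 volume ≤ eLpNorm ((ε : ℝ) • u) 2 volume := by
      refine eLpNorm_mono fun x => ?_
      rw [Pi.smul_apply, norm_smul, Real.norm_eq_abs, abs_of_nonneg hε.le]
      exact hgpt x
    have h2 : eLpNorm ((ε:ℝ) • u) 2 volume = ‖ε‖₊ • eLpNorm u 2 volume :=
      eLpNorm_const_smul ε u 2 volume
    rw [hnorm] at h2
    rw [h2] at h1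
    calc (eLpNorm g 2 volume).toReal ≤ ((‖ε‖₊ • (1:ENNReal))).toReal :=
      ENNReal.toReal_mono (by simp [ENNReal.smul_def]) h1
    _ = ε := by
        simp [ENNReal.smul_def, Real.norm_eq_abs, abs_of_nonneg hε.le]
  have hEgnorm : (eLpNorm (Em lam g) 2 volume).toReal ≤ (eLpNorm g 2 volume).toReal := by
    obtain ⟨hEg', hFEg⟩ := hEm lam hlam g hg2
    have h1 : eLpNorm (Em lam g) 2 volume = eLpNorm (FT.toFun (Em lam g)) 2 volume :=
      (FT.plancherel _ hEg').symm
    have h2 : eLpNorm (FT.toFun (Em lam g)) 2 volume ≤ eLpNorm (FT.toFun g) 2 volume := by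
      rw [eLpNorm_congr_ae hFEg]
      refine eLpNorm_mono fun k => ?_
      rw [norm_mul]
      have hb1 : ‖(lam:ℂ) / ((lam:ℂ) - Complex.I * c * k)‖ ≤ 1 := by
        rw [norm_div]
        refine div_le_one_of_le₀ ?_ (norm_nonneg _)
        have hre' : ((lam:ℂ) - Complex.I * c * k).re = lam := by simp
        have h4 := Complex.abs_re_le_norm ((lam:ℂ) - Complex.I * c * k)
        rw [hre'] at h4
        have h5 : ‖(lam:ℂ)‖ = |lam| := by simp [Complex.norm_real, Real.norm_eq_abs]
        rw [h5]
        exact h4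
      calc ‖(lam:ℂ) / ((lam:ℂ) - Complex.I * c * k)‖ * ‖FT.toFun g k‖
          ≤ 1 * ‖FT.toFun g k‖ := mul_le_mul_of_nonneg_right hb1 (norm_nonneg _)
      _ = ‖FT.toFun g k‖ := one_mul _
    have h3 := FT.plancherel g hg2
    rw [h1]
    exact ENNReal.toReal_mono (h3 ▸ hg2.2.ne) (h2.trans_eq h3)
  have hL2u : (eLpNorm u 2 volume).toReal = 1 := by rw [hnorm]; simp
  have ht3 : |(L2inner g u).re| ≤ ε := by
    have h := L2inner_norm_le hg2 hu1
    rw [hL2u, mul_one] at h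
    have h2 := Complex.abs_re_le_norm (L2inner g u)
    linarith
  have ht5 : |(L2inner (Em lam g) u).re| ≤ ε := by
    have h := L2inner_norm_le hEg hu1
    rw [hL2u, mul_one] at h
    have h2 := Complex.abs_re_le_norm (L2inner (Em lam g) u)
    linarith
  rw [hre]
  have habs3 := abs_le.mp ht3
  have habs5 := abs_le.mp ht5
  have hinv : (0:ℝ) < 1/c := by positivity
  have hεc : (1/c) * ε = (1 - 1/c) / 8 := by
    rw [hεdef]; field_simp
  have e3 : (1/c) * (1 + (L2inner g u).re) ≤ (1/c) * (1 + ε) :=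
    mul_le_mul_of_nonneg_left (by linarith [habs3.2]) hinv.le
  have e5 : (1/c) * (0 - ε)
      ≤ (1/c) * ((L2inner (Em lam u) u).re + (L2inner (Em lam g) u).re) :=
    mul_le_mul_of_nonneg_left (by linarith [habs5.1]) hinv.le
  have hmul : (1/c)*(1+ε) = 1/c + (1-1/c)/8 := by rw [mul_add, mul_one, hεc]
  have hmul2 : (1/c)*(0-ε) = -((1-1/c)/8) := by
    rw [mul_sub, mul_zero, hεc]; ring
  linarith
end
end

section
/- There exists Λ > 0 such that for every λ > Λ, the operator A^λ has no eigenvalues in the closed left half-plane: there exist no k ∈ ℂ with Re k ≤ 0 and nonzero u ∈ H^m(ℝ) satisfying A^λ u = k u. -/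
open MeasureTheory Filter Set

noncomputable section

private lemma FT_add' (FT : FourierL2) {X Y : ℝ → ℂ} (hX : MemLp X 2 volume)
    (hY : MemLp Y 2 volume) :
    FT.toFun (fun x => X x + Y x) =ᵐ[volume] fun k => FT.toFun X k + FT.toFun Y k :=
  FT.map_add X Y hX hY

private lemma FT_mul' (FT : FourierL2) (a : ℂ) {X : ℝ → ℂ} (hX : MemLp X 2 volume) :
    FT.toFun (fun x => a * X x) =ᵐ[volume] fun k => a * FT.toFun X k :=
  FT.map_smul a X hX

private lemma FT_sub' (FT : FourierL2) {X Y : ℝ → ℂ} (hX : MemLp X 2 volume)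
    (hY : MemLp Y 2 volume) :
    FT.toFun (fun x => X x - Y x) =ᵐ[volume] fun k => FT.toFun X k - FT.toFun Y k := by
  have h1 : (fun x => X x - Y x) = fun x => X x + (-1:ℂ) * Y x := by funext x; ring
  rw [h1]
  refine (FT_add' FT hX (hY.const_mul (-1))).trans ?_
  filter_upwards [FT_mul' FT (-1) hY] with k hk
  rw [hk]; ring

private lemma FT_congr' (FT : FourierL2) {X Y : ℝ → ℂ} (hX : MemLp X 2 volume)
    (hY : MemLp Y 2 volume) (h : X =ᵐ[volume] Y) :
    FT.toFun X =ᵐ[volume] FT.toFun Y := by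
  have hD : MemLp (fun x => X x - Y x) 2 volume := hX.sub hY
  have hD0 : (fun x => X x - Y x) =ᵐ[volume] (0 : ℝ → ℂ) := by
    filter_upwards [h] with x hx; simp [hx]
  have hDn : eLpNorm (fun x => X x - Y x) 2 volume = 0 := by
    rw [eLpNorm_congr_ae hD0]; exact eLpNorm_zero
  have hFD : FT.toFun (fun x => X x - Y x) =ᵐ[volume] 0 := by
    have h2 := FT.plancherel _ hD
    rw [hDn] at h2
    exact (eLpNorm_eq_zero_iff (FT.memLp _ hD).1 (by norm_num)).mp h2
  have hXeq : X = fun x => Y x + (X x - Y x) := by funext x; ring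
  rw [hXeq]
  refine (FT.map_add Y (fun x => X x - Y x) hY hD).trans ?_
  filter_upwards [hFD] with k hk
  simp only [Pi.add_apply, hk, Pi.zero_apply, add_zero]

private lemma bdd_of_cocompact {g : ℝ → ℝ} (hg : Continuous g)
    (h : Filter.Tendsto g (cocompact ℝ) (nhds 0)) : ∃ B : ℝ, 0 ≤ B ∧ ∀ x, |g x| ≤ B := by
  have h1 : ∀ᶠ x in cocompact ℝ, |g x| < 1 := by
    have := Metric.tendsto_nhds.mp h 1 one_pos
    simpa [Real.dist_eq] using this
  rw [Filter.hasBasis_cocompact.eventually_iff] at h1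
  obtain ⟨S, hS, hS1⟩ := h1
  obtain ⟨C, hC⟩ := hS.exists_bound_of_continuousOn hg.continuousOn
  refine ⟨max C 1, le_trans zero_le_one (le_max_right _ _), fun x => ?_⟩
  by_cases hx : x ∈ S
  · exact le_trans (by simpa using hC x hx) (le_max_left _ _)
  · exact le_trans (le_of_lt (hS1 hx)) (le_max_right _ _)

open scoped ENNReal NNReal
private def wfun (f uc : ℝ → ℝ) (u : ℝ → ℂ) : ℝ → ℂ :=
  fun y => (1 + Complex.ofReal (deriv f (uc y))) * u y

/-- Lemma 2.6: there is `Λ > 0` such that for `λ > Λ` the operator `A^λ` has no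
eigenvalues in `{Re k ≤ 0}`. -/
theorem bbm_no_eigenvalue_large_lambda
    (m : ℝ) (hm : 1 ≤ m)
    (α : ℝ → ℝ) (a b C₀ K : ℝ)
    (ha : 0 < a) (hb : 0 < b) (hC₀ : 0 < C₀) (hK : 0 < K)
    (hα_nonneg : ∀ k, 0 ≤ α k) (hα_smooth : ContDiff ℝ 1 α)
    (hα_deriv : ∀ k, |deriv α k| ≤ C₀ * (1 + |k|) ^ (m - 1))
    (hα_lower : ∀ k, K ≤ |k| → a * |k| ^ m ≤ α k)
    (hα_upper : ∀ k, K ≤ |k| → α k ≤ b * |k| ^ m)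
    (FT : FourierL2)
    (Mop : (ℝ → ℂ) → ℝ → ℂ)
    (hM : IsMult FT (fun k => (α k : ℂ)) (HmMem FT m) Mop)
    (f : ℝ → ℝ) (hf : ContDiff ℝ 1 f) (hf0 : f 0 = 0) (hf'0 : deriv f 0 = 0)
    (c : ℝ) (hc : 1 < c)
    (uc : ℝ → ℝ) (huc_cont : Continuous uc)
    (huc_mem : HmMem FT m (fun x => (uc x : ℂ)))
    (huc_decay : Tendsto uc (cocompact ℝ) (nhds 0))
    (huc_eq : (fun x => Mop (fun y => (uc y : ℂ)) x + (1 - 1/c : ℂ) * (uc x : ℂ)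
        - (1/c : ℂ) * (f (uc x) : ℂ)) =ᵐ[volume] 0)
    (Em : ℝ → (ℝ → ℂ) → ℝ → ℂ)
    (hEm : ∀ lam : ℝ, 0 < lam → IsMult FT
        (fun k => (lam : ℂ) / (lam - Complex.I * c * k)) (fun u => MemLp u 2 volume) (Em lam))
    :
    ∃ Λ : ℝ, 0 < Λ ∧ ∀ lam : ℝ, Λ < lam →
      ¬ ∃ (k : ℂ) (u : ℝ → ℂ), k.re ≤ 0 ∧ HmMem FT m u ∧
        ¬ u =ᵐ[volume] (0 : ℝ → ℂ) ∧
        Abbm Mop Em f uc c lam u =ᵐ[volume] fun x => k * u x := by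

  have hder : Continuous fun x => deriv f (uc x) :=
    (hf.continuous_deriv le_rfl).comp huc_cont
  have hgt : Tendsto (fun x => deriv f (uc x)) (cocompact ℝ) (nhds 0) := by
    have h0 : Tendsto (deriv f) (nhds 0) (nhds 0) := by
      have := (hf.continuous_deriv le_rfl).tendsto 0
      rwa [hf'0] at this
    exact h0.comp huc_decay
  obtain ⟨B, hB0, hB⟩ := bdd_of_cocompact hder hgt
  have h2B : (0:ℝ) < 2 * (1 + B) := by linarith
  set ε : ℝ := 1 / (2 * (1 + B)) with hεdef
  have hε0 : 0 < ε := by positivity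
  set R : ℝ := max K (max 1 (2 * (1 + B) / a)) with hRdef
  have hR1 : (1:ℝ) ≤ R := le_trans (le_max_left _ _) (le_max_right _ _)
  have hRK : K ≤ R := le_max_left _ _
  have hR0 : (0:ℝ) < R := lt_of_lt_of_le one_pos hR1
  have hRa : 2 * (1 + B) ≤ a * R := by
    have h' : 2 * (1 + B) / a ≤ R := le_trans (le_max_right _ _) (le_max_right _ _)
    calc 2 * (1 + B) = a * (2 * (1 + B) / a) := by field_simp
    _ ≤ a * R := by nlinarith
  refine ⟨2 * (1 + B) * R, by positivity, fun lam hlam => ?_⟩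
  rintro ⟨κ, u, hκ, hu, hu0, heig⟩
  have hlam0 : (0:ℝ) < lam := lt_trans (by positivity) hlam
  have hu2 : MemLp u 2 volume := hu.1
  have hc0 : (0:ℝ) < c := lt_trans one_pos hc
  have hwbd : ∀ x, ‖wfun f uc u x‖ ≤ (1 + B) * ‖u x‖ := by
    intro x
    have h1 : ‖(1 + Complex.ofReal (deriv f (uc x)))‖ ≤ 1 + B := by
      calc ‖(1 + Complex.ofReal (deriv f (uc x)))‖
          ≤ ‖(1:ℂ)‖ + ‖Complex.ofReal (deriv f (uc x))‖ := norm_add_le _ _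
      _ = 1 + |deriv f (uc x)| := by simp
      _ ≤ 1 + B := by linarith [hB x]
    calc ‖wfun f uc u x‖ = ‖(1 + Complex.ofReal (deriv f (uc x)))‖ * ‖u x‖ := norm_mul _ _
    _ ≤ (1 + B) * ‖u x‖ := mul_le_mul_of_nonneg_right h1 (norm_nonneg _)
  have hwm : AEStronglyMeasurable (wfun f uc u) volume :=
    ((continuous_const.add (Complex.continuous_ofReal.comp hder)).aestronglyMeasurable).mul hu2.1
  have hw2 : MemLp (wfun f uc u) 2 volume :=
    MemLp.of_le_mul hu2 hwm (ae_of_all _ hwbd)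
  obtain ⟨hMu1, hMu2⟩ := hM u hu
  obtain ⟨hEw1, hEw2⟩ := hEm lam hlam0 (wfun f uc u) hw2
  have hA2 : MemLp (Abbm Mop Em f uc c lam u) 2 volume :=
    (hMu1.add hu2).sub ((hw2.sub hEw1).const_mul (1/c : ℂ))
  have hkey : ∀ᵐ k ∂volume, ((α k : ℂ) + 1 - κ) * FT.toFun u k
      = (1/c : ℂ) * (1 - (lam : ℂ) / ((lam : ℂ) - Complex.I * c * k))
        * FT.toFun (wfun f uc u) k := by
    have e1 : FT.toFun (Abbm Mop Em f uc c lam u) =ᵐ[volume]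
        fun k => FT.toFun (fun x => Mop u x + u x) k
          - FT.toFun (fun x => (1/c : ℂ) * (wfun f uc u x - Em lam (wfun f uc u) x)) k :=
      FT_sub' FT (hMu1.add hu2) ((hw2.sub hEw1).const_mul (1/c : ℂ))
    have e2 : FT.toFun (fun x => Mop u x + u x) =ᵐ[volume]
        fun k => FT.toFun (Mop u) k + FT.toFun u k := FT_add' FT hMu1 hu2
    have e4 : FT.toFun (fun x => (1/c : ℂ) * (wfun f uc u x - Em lam (wfun f uc u) x))
        =ᵐ[volume]
        fun k => (1/c : ℂ) * FT.toFun (fun x => wfun f uc u x - Em lam (wfun f uc u) x) k :=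
      FT_mul' FT _ (hw2.sub hEw1)
    have e5 : FT.toFun (fun x => wfun f uc u x - Em lam (wfun f uc u) x) =ᵐ[volume]
        fun k => FT.toFun (wfun f uc u) k - FT.toFun (Em lam (wfun f uc u)) k :=
      FT_sub' FT hw2 hEw1
    have e7 : FT.toFun (Abbm Mop Em f uc c lam u) =ᵐ[volume]
        FT.toFun (fun x => κ * u x) :=
      FT_congr' FT hA2 (hu2.const_mul κ) heig
    have e8 : FT.toFun (fun x => κ * u x) =ᵐ[volume] fun k => κ * FT.toFun u k :=
      FT_mul' FT κ hu2
    filter_upwards [e1, e2, hMu2, e4, e5, hEw2, e7, e8] with k h1 h2 h3 h4 h5 h6 h7 h8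
    linear_combination h7 + h8 - h1 - h2 - h3 + h4 + (1/c : ℂ) * h5 - (1/c : ℂ) * h6
  have hptwise : ∀ᵐ k ∂volume, ‖FT.toFun u k‖ ≤ ε * ‖FT.toFun (wfun f uc u) k‖ := by
    filter_upwards [hkey] with k hk
    set z : ℂ := (lam : ℂ) - Complex.I * c * k with hzdef
    have hzre : z.re = lam := by
      simp [hzdef, Complex.mul_re, Complex.mul_im]
    have hzim : z.im = -(c * k) := by
      simp [hzdef, Complex.mul_re, Complex.mul_im]
    have hz0 : z ≠ 0 := by
      intro h; rw [h] at hzre; simp at hzre; linarith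
    have habsz : (0:ℝ) < ‖z‖ := by
      have := Complex.re_le_norm z; rw [hzre] at this; linarith
    have hzlam : lam ≤ ‖z‖ := by
      have := Complex.re_le_norm z; rwa [hzre] at this
    have hzck : c * |k| ≤ ‖z‖ := by
      have := Complex.abs_im_le_norm z
      rwa [hzim, abs_neg, abs_mul, abs_of_pos hc0] at this
    have h1s : (1 : ℂ) - (lam : ℂ) / z = (-(Complex.I * c * k)) / z := by
      field_simp
      rw [hzdef]; ring
    have habs1s : ‖(1 : ℂ) - (lam : ℂ) / z‖ = c * |k| / ‖z‖ := by
      rw [h1s, norm_div, norm_neg, norm_mul, norm_mul]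
      simp [abs_of_pos hc0]
    have hnorm : ‖(α k : ℂ) + 1 - κ‖ * ‖FT.toFun u k‖
        = (|k| / ‖z‖) * ‖FT.toFun (wfun f uc u) k‖ := by
      have habs := congrArg norm hk
      rw [norm_mul, norm_mul, norm_mul] at habs
      rw [habs, habs1s]
      have hcabs : ‖(1/c : ℂ)‖ = 1/c := by
        rw [norm_div]; simp [abs_of_pos hc0]
      rw [hcabs]
      field_simp
    have hlow : α k + 1 ≤ ‖(α k : ℂ) + 1 - κ‖ := by
      have h' := Complex.re_le_norm ((α k : ℂ) + 1 - κ)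
      have hre : ((α k : ℂ) + 1 - κ).re = α k + 1 - κ.re := by simp
      rw [hre] at h'
      linarith
    have hmain : (α k + 1) * ‖FT.toFun u k‖
        ≤ (|k| / ‖z‖) * ‖FT.toFun (wfun f uc u) k‖ := by
      rw [← hnorm]
      exact mul_le_mul_of_nonneg_right hlow (norm_nonneg _)
    have hw0 : (0:ℝ) ≤ ‖FT.toFun (wfun f uc u) k‖ := norm_nonneg _
    have hu0' : (0:ℝ) ≤ ‖FT.toFun u k‖ := norm_nonneg _
    have hαk0 := hα_nonneg k
    rcases le_or_gt |k| R with hkR | hkR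
    · have hεR : ε * (2 * (1 + B) * R) = R := by
        rw [hεdef]; field_simp
      have h2 : R ≤ ε * lam := by
        linarith [mul_le_mul_of_nonneg_left hlam.le hε0.le]
      have hdiv : |k| / ‖z‖ ≤ ε := by
        rw [div_le_iff₀ habsz]
        linarith [mul_le_mul_of_nonneg_left hzlam hε0.le]
      linarith [hmain, mul_le_mul_of_nonneg_right hdiv hw0, mul_nonneg hαk0 hu0']
    · have hKk : K ≤ |k| := le_trans hRK hkR.le
      have hαlow : 2 * (1 + B) ≤ α k + 1 := by
        have h1 := hα_lower k hKk
        have h2 : R ^ m ≤ |k| ^ m := Real.rpow_le_rpow hR0.le hkR.le (by linarith)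
        have h3 : R ≤ R ^ m := by
          have := Real.rpow_le_rpow_of_exponent_le hR1 hm
          rwa [Real.rpow_one] at this
        linarith [mul_le_mul_of_nonneg_left h3 ha.le, mul_le_mul_of_nonneg_left h2 ha.le]
      have hdiv : |k| / ‖z‖ ≤ 1 := by
        rw [div_le_one habsz]
        linarith [mul_le_mul_of_nonneg_right hc.le (abs_nonneg k)]
      have hstep : 2 * (1 + B) * ‖FT.toFun u k‖ ≤ ‖FT.toFun (wfun f uc u) k‖ := by
        linarith [mul_le_mul_of_nonneg_right hαlow hu0',
          mul_le_mul_of_nonneg_right hdiv hw0, hmain]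
      have hε2B : ε * (2 * (1 + B)) = 1 := by
        rw [hεdef]; field_simp
      have h4 : ε * (2 * (1 + B)) * ‖FT.toFun u k‖ = 1 * ‖FT.toFun u k‖ := by
        rw [hε2B]
      linarith [mul_le_mul_of_nonneg_left hstep hε0.le, h4]
  have hFu := FT.memLp u hu2
  have hFw := FT.memLp _ hw2
  have hN1 : eLpNorm (FT.toFun u) 2 volume
      ≤ eLpNorm ((↑ε : ℂ) • FT.toFun (wfun f uc u)) 2 volume := by
    refine eLpNorm_mono_ae ?_
    filter_upwards [hptwise] with k hk
    rw [Pi.smul_apply, norm_smul, Complex.norm_real, Real.norm_eq_abs, abs_of_pos hε0]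
    exact hk
  rw [eLpNorm_const_smul] at hN1
  have hN2 : eLpNorm (wfun f uc u) 2 volume
      ≤ eLpNorm ((↑(1 + B) : ℂ) • u) 2 volume := by
    refine eLpNorm_mono_ae (ae_of_all _ fun x => ?_)
    rw [Pi.smul_apply, norm_smul, Complex.norm_real, Real.norm_eq_abs,
      abs_of_nonneg (by linarith : (0:ℝ) ≤ 1 + B)]
    exact hwbd x
  rw [eLpNorm_const_smul] at hN2
  have hP1 := FT.plancherel u hu2
  have hP2 := FT.plancherel _ hw2
  have hchain : eLpNorm u 2 volume
      ≤ (‖(↑ε : ℂ)‖₊ * ‖(↑(1 + B) : ℂ)‖₊ : ℝ≥0∞) * eLpNorm u 2 volume := by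
    calc eLpNorm u 2 volume = eLpNorm (FT.toFun u) 2 volume := hP1.symm
    _ ≤ (‖(↑ε : ℂ)‖₊ : ℝ≥0∞) * eLpNorm (FT.toFun (wfun f uc u)) 2 volume := hN1
    _ = (‖(↑ε : ℂ)‖₊ : ℝ≥0∞) * eLpNorm (wfun f uc u) 2 volume := by rw [hP2]
    _ ≤ (‖(↑ε : ℂ)‖₊ : ℝ≥0∞) * ((‖(↑(1 + B) : ℂ)‖₊ : ℝ≥0∞) * eLpNorm u 2 volume) :=
        mul_le_mul_right hN2 _
    _ = _ := by rw [← mul_assoc, ← ENNReal.coe_mul]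
  have hcoeff : (‖(↑ε : ℂ)‖₊ * ‖(↑(1 + B) : ℂ)‖₊ : ℝ≥0∞) < 1 := by
    have hr : ‖(↑ε : ℂ) * (↑(1 + B) : ℂ)‖ < 1 := by
      have he : (↑ε : ℂ) * (↑(1 + B) : ℂ) = ((ε * (1 + B) : ℝ) : ℂ) := by push_cast; ring
      rw [he, Complex.norm_real, Real.norm_eq_abs]
      have he2 : ε * (1 + B) = 1/2 := by rw [hεdef]; field_simp
      rw [he2, abs_of_nonneg (by norm_num : (0:ℝ) ≤ 1/2)]; norm_num
    rw [← ENNReal.coe_mul, ← nnnorm_mul]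
    exact_mod_cast hr
  have hNu0 : eLpNorm u 2 volume ≠ 0 := by
    intro h
    exact hu0 ((eLpNorm_eq_zero_iff hu2.1 (by norm_num)).mp h)
  have hNut : eLpNorm u 2 volume ≠ ⊤ := hu2.2.ne
  have hlt : (‖(↑ε : ℂ)‖₊ * ‖(↑(1 + B) : ℂ)‖₊ : ℝ≥0∞) * eLpNorm u 2 volume
      < 1 * eLpNorm u 2 volume :=
    ENNReal.mul_lt_mul_left hNu0 hNut hcoeff
  rw [one_mul] at hlt
  exact absurd (lt_of_le_of_lt hchain hlt) (lt_irrefl _)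
end
end

section
/- There exist λ₀ > 0 and C > 0 such that for every 0 < λ < λ₀, every z ∈ ℂ with Re z ≤ ½(1 − 1/c), and every u ∈ H^m(ℝ) and v ∈ L²(ℝ) satisfying (A^λ − z)u = v, one has ‖u‖_{H^{m/2}} ≤ C(‖u‖_{L²_e} + ‖v‖_{L²}), where C is independent of λ, z, u, v. -/
open MeasureTheory Filter Set

noncomputable section

/-- The `H^{m/2}` norm, `‖u‖²_{H^{m/2}} = ∫ (1+|k|^m)|û(k)|² dk`. -/
def HmHalfNorm (FT : FourierL2) (m : ℝ) (u : ℝ → ℂ) : ℝ :=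
  Real.sqrt (∫ k : ℝ, (1 + |k| ^ m) * ‖FT.toFun u k‖ ^ 2)

/-- The weighted norm `‖u‖_{L²_e}` with weight `e = (f'(u_c))²`. -/
def L2eNorm (f uc : ℝ → ℝ) (u : ℝ → ℂ) : ℝ :=
  Real.sqrt (∫ x : ℝ, (deriv f (uc x)) ^ 2 * ‖u x‖ ^ 2)

theorem FT_congr (FT : FourierL2) {u u' : ℝ → ℂ} (hu : MemLp u 2 volume)
    (hu' : MemLp u' 2 volume) (h : u =ᵐ[volume] u') :
    FT.toFun u =ᵐ[volume] FT.toFun u' := by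
  have hd : MemLp (u - u') 2 volume := hu.sub hu'
  have hd0 : (u - u') =ᵐ[volume] 0 := by
    filter_upwards [h] with x hx
    simp [Pi.sub_apply, hx]
  have h1 : eLpNorm (FT.toFun (u - u')) 2 volume = 0 := by
    rw [FT.plancherel _ hd, eLpNorm_congr_ae hd0, eLpNorm_zero]
  have h2 : FT.toFun (u - u') =ᵐ[volume] 0 :=
    (eLpNorm_eq_zero_iff (FT.memLp _ hd).aestronglyMeasurable (by norm_num)).mp h1
  have h3 : FT.toFun (u' + (u - u')) =ᵐ[volume] FT.toFun u' + FT.toFun (u - u') :=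
    FT.map_add _ _ hu' hd
  have he : u' + (u - u') = u := by funext x; simp
  rw [he] at h3
  filter_upwards [h2, h3] with x h2x h3x
  rw [h3x, Pi.add_apply, h2x, Pi.zero_apply, add_zero]

def FTiso (FT : FourierL2) :
    Lp ℂ 2 (volume : Measure ℝ) →ₗᵢ[ℂ] Lp ℂ 2 (volume : Measure ℝ) where
  toFun g := (FT.memLp _ (Lp.memLp g)).toLp _
  map_add' g h := by
    rw [← MemLp.toLp_add]
    exact MemLp.toLp_congr _ _
      ((FT_congr FT (Lp.memLp _) ((Lp.memLp g).add (Lp.memLp h)) (Lp.coeFn_add g h)).trans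
        (FT.map_add _ _ (Lp.memLp g) (Lp.memLp h)))
  map_smul' a g := by
    simp only [RingHom.id_apply]
    rw [← MemLp.toLp_const_smul]
    exact MemLp.toLp_congr _ _
      ((FT_congr FT (Lp.memLp _) ((Lp.memLp g).const_smul a) (Lp.coeFn_smul a g)).trans
        (FT.map_smul a _ (Lp.memLp g)))
  norm_map' g := by
    show ‖(FT.memLp _ (Lp.memLp g)).toLp _‖ = ‖g‖
    rw [Lp.norm_toLp, FT.plancherel _ (Lp.memLp g), Lp.norm_def]

theorem FTiso_toLp (FT : FourierL2) {u : ℝ → ℂ} (hu : MemLp u 2 volume) :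
    FTiso FT (hu.toLp u) = (FT.memLp u hu).toLp _ := by
  show (FT.memLp _ (Lp.memLp (hu.toLp u))).toLp _ = (FT.memLp u hu).toLp _
  exact MemLp.toLp_congr _ _ (FT_congr FT (Lp.memLp _) hu hu.coeFn_toLp)

theorem inner_toLp {f g : ℝ → ℂ} (hf : MemLp f 2 volume) (hg : MemLp g 2 volume) :
    (inner ℂ (hf.toLp f) (hg.toLp g) : ℂ) = ∫ x : ℝ, (starRingEnd ℂ) (f x) * g x := by
  rw [L2.inner_def]
  apply integral_congr_ae
  filter_upwards [hf.coeFn_toLp, hg.coeFn_toLp] with x h1 h2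
  rw [h1, h2, RCLike.inner_apply, mul_comm]

theorem normsq_integrable {f : ℝ → ℂ} (hf : MemLp f 2 volume) :
    Integrable (fun x : ℝ => ‖f x‖ ^ 2) volume := by
  have := hf.integrable_norm_rpow (by norm_num) (by norm_num)
  simpa [ENNReal.toReal_ofNat, Real.rpow_natCast] using this

theorem norm_toLp_sq {f : ℝ → ℂ} (hf : MemLp f 2 volume) :
    ‖hf.toLp f‖ ^ 2 = ∫ x : ℝ, ‖f x‖ ^ 2 := by
  have h := inner_self_eq_norm_sq_to_K (𝕜 := ℂ) (hf.toLp f)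
  rw [inner_toLp hf hf] at h
  have h2 : ∫ x : ℝ, (starRingEnd ℂ) (f x) * f x = ((∫ x : ℝ, ‖f x‖ ^ 2 : ℝ) : ℂ) := by
    rw [show ((∫ x : ℝ, ‖f x‖ ^ 2 : ℝ) : ℂ) = Complex.ofRealCLM (∫ x : ℝ, ‖f x‖ ^ 2 : ℝ) from rfl,
      ← ContinuousLinearMap.integral_comp_comm _ (normsq_integrable hf)]
    apply integral_congr_ae
    filter_upwards with x
    rw [mul_comm, Complex.mul_conj]
    simp [Complex.normSq_eq_norm_sq]
  rw [h2] at h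
  have h4 : ((‖hf.toLp f‖ ^ 2 : ℝ) : ℂ) = ((∫ x : ℝ, ‖f x‖ ^ 2 : ℝ) : ℂ) := by
    push_cast
    exact h.symm
  exact Complex.ofReal_inj.mp h4


theorem complex_re_integral {f : ℝ → ℂ} (hf : Integrable f volume) :
    (∫ x : ℝ, f x).re = ∫ x : ℝ, (f x).re := by
  have := ContinuousLinearMap.integral_comp_comm Complex.reCLM hf
  simpa using this.symm

theorem deriv_comp_bound {f uc : ℝ → ℝ} (hf : ContDiff ℝ 1 f) (huc_cont : Continuous uc)
    (huc_decay : Tendsto uc (cocompact ℝ) (nhds 0)) :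
    ∃ B : ℝ, 0 ≤ B ∧ ∀ x, |deriv f (uc x)| ≤ B := by
  have h1 : ∀ᶠ x in cocompact ℝ, |uc x| < 1 := by
    have := Metric.tendsto_nhds.mp huc_decay 1 one_pos
    simpa [Real.dist_eq] using this
  obtain ⟨t, ht, hts⟩ := Filter.mem_cocompact.mp h1
  obtain ⟨R₀, hR₀⟩ := ht.exists_bound_of_continuousOn huc_cont.continuousOn
  set R := max R₀ 1 with hR
  have hucb : ∀ x, |uc x| ≤ R := by
    intro x
    by_cases hx : x ∈ t
    · exact le_trans (by simpa [Real.norm_eq_abs] using hR₀ x hx) (le_max_left _ _)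
    · have := hts hx
      simp only [Set.mem_setOf_eq] at this
      exact le_trans this.le (le_max_right _ _)
  obtain ⟨B₀, hB₀⟩ := (isCompact_Icc (a := -R) (b := R)).exists_bound_of_continuousOn
    (hf.continuous_deriv le_rfl).continuousOn
  refine ⟨max B₀ 0, le_max_right _ _, fun x => ?_⟩
  have : uc x ∈ Set.Icc (-R) R := by
    have := hucb x
    constructor <;> [linarith [abs_le.mp this |>.1]; linarith [abs_le.mp this |>.2]]
  exact le_trans (by simpa [Real.norm_eq_abs] using hB₀ (uc x) this) (le_max_left _ _)

theorem pt_bound1 {X e s : ℝ} (he0 : 0 ≤ e) (h1 : 1 ≤ X) (h2 : e ≤ X) (hs : 0 ≤ s) :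
    (1 + e) * s ≤ 2 * (X ^ 2 * s) := by
  have hXX : X ≤ X ^ 2 := by nlinarith
  have h3 : 0 ≤ 2 * X ^ 2 - 1 - e := by linarith
  nlinarith [mul_nonneg h3 hs]

theorem ab_case1 {αk M b e : ℝ} (h1 : αk ≤ M) (hM : 0 ≤ M) (hb : 0 < b) (he : 0 ≤ e) :
    αk ≤ (M + b) * (1 + e) := by nlinarith

theorem ab_case2 {αk M b e : ℝ} (h1 : αk ≤ b * e) (hM : 0 ≤ M) (hb : 0 < b) (he : 0 ≤ e) :
    αk ≤ (M + b) * (1 + e) := by nlinarith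

theorem pt_bound2 {αk e s Mb : ℝ} (hαk : 0 ≤ αk) (hs : 0 ≤ s) (hMb : 0 ≤ Mb)
    (h : αk ≤ Mb * (1 + e)) : αk * s ≤ Mb * ((1 + e) * s) := by nlinarith

theorem pt_bound3a {e Km s P : ℝ} (h1 : e ≤ Km) (hs : 0 ≤ s) (hP : 0 ≤ P) :
    (1 + e) * s ≤ (1 + Km) * s + P := by nlinarith

theorem pt_bound3b {e Km s αk aa : ℝ} (haa : 0 < aa) (h1 : aa * e ≤ αk) (hs : 0 ≤ s)
    (hKm : 0 ≤ Km) : (1 + e) * s ≤ (1 + Km) * s + (1/aa) * (αk * s) := by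
  have h4 : e * s ≤ (αk * s) / aa :=
    (le_div_iff₀ haa).mpr (by nlinarith [mul_le_mul_of_nonneg_right h1 hs])
  have h5 : (1/aa) * (αk * s) = (αk * s) / aa := by ring
  nlinarith [mul_nonneg hKm hs]

theorem re_formula (J Nsq ic : ℝ) (A B C z : ℂ) :
    (((J : ℝ) : ℂ) + ((Nsq : ℝ) : ℂ) - ((ic : ℝ) : ℂ) * ((((Nsq : ℝ) : ℂ) + A) - (B + C))
      - z * ((Nsq : ℝ) : ℂ)).re
    = J + Nsq - ic * ((Nsq + A.re) - (B.re + C.re)) - z.re * Nsq := by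
  simp only [Complex.add_re, Complex.sub_re, Complex.mul_re, Complex.ofReal_re,
    Complex.ofReal_im, Complex.add_im, Complex.sub_im, zero_mul, mul_zero, sub_zero]

theorem key_lemma {ic δ zre Jα N nG nV A1 A2 A3 A4 : ℝ}
    (hic0 : 0 < ic) (hic1 : ic < 1) (hδ : 0 < δ) (hδic : 1 - ic = 2 * δ)
    (hzδ : zre ≤ δ) (hN0 : 0 ≤ N) (hG : 0 ≤ nG) (hV : 0 ≤ nV) (hJ : 0 ≤ Jα)
    (hre : A4 = Jα + N ^ 2 - ic * ((N ^ 2 + A1) - (A2 + A3)) - zre * N ^ 2)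
    (hA1 : A1 ≤ N * nG) (hA2 : 0 ≤ A2) (hA3 : -A3 ≤ N * nG) (hA4 : A4 ≤ N * nV) :
    Jα ≤ (4 / δ) * (nG + nV) ^ 2 ∧ N ^ 2 ≤ (2 / δ) ^ 2 * (nG + nV) ^ 2 := by
  set Q := nG + nV with hQdef
  have hQ0 : 0 ≤ Q := by positivity
  have hNG0 : 0 ≤ N * nG := mul_nonneg hN0 hG
  have hNV0 : 0 ≤ N * nV := mul_nonneg hN0 hV
  have h7 : zre * N ^ 2 ≤ δ * N ^ 2 := mul_le_mul_of_nonneg_right hzδ (sq_nonneg N)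
  have hbr : A1 - (A2 + A3) ≤ 2 * (N * nG) := by linarith
  have h5 : ic * ((N ^ 2 + A1) - (A2 + A3)) ≤ ic * N ^ 2 + 2 * (N * nG) := by
    nlinarith [mul_le_mul_of_nonneg_left hbr hic0.le, sq_nonneg N]
  have hNQG : N * nG ≤ N * Q := by nlinarith
  have hNQV : N * nV ≤ N * Q := by nlinarith
  have hkey : Jα + δ * N ^ 2 ≤ 2 * (N * Q) := by nlinarith [hre, h5, hA4, h7, sq_nonneg N]
  have hNQ : δ * N ≤ 2 * Q := by
    rcases eq_or_lt_of_le hN0 with h | h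
    · rw [← h, mul_zero]; positivity
    · have h9 : δ * N * N ≤ 2 * Q * N := by nlinarith
      exact le_of_mul_le_mul_right h9 h
  constructor
  · have t2 : Jα ≤ 2 * (N * Q) := by nlinarith [mul_nonneg hδ.le (sq_nonneg N)]
    have t1 : δ * N * Q ≤ 2 * Q * Q := mul_le_mul_of_nonneg_right hNQ hQ0
    rw [div_mul_eq_mul_div, le_div_iff₀ hδ]
    nlinarith [mul_le_mul_of_nonneg_right t2 hδ.le, t1]
  · have hN : N ≤ 2 * Q / δ := by
      rw [le_div_iff₀ hδ]; linarith
    calc N ^ 2 ≤ (2 * Q / δ) ^ 2 := pow_le_pow_left₀ hN0 hN 2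
      _ = (2 / δ) ^ 2 * Q ^ 2 := by ring

set_option maxHeartbeats 1000000 in
/-- Lemma 2.12: the a priori estimate `‖u‖_{H^{m/2}} ≤ C(‖u‖_{L²_e} + ‖v‖_{L²})` for
solutions of `(A^λ - z)u = v` with `λ` small and `Re z ≤ ½(1 - 1/c)`. -/
theorem bbm_a_priori_estimate
    (m : ℝ) (hm : 1 ≤ m)
    (α : ℝ → ℝ) (a b C₀ K : ℝ)
    (ha : 0 < a) (hb : 0 < b) (hC₀ : 0 < C₀) (hK : 0 < K)
    (hα_nonneg : ∀ k, 0 ≤ α k) (hα_smooth : ContDiff ℝ 1 α)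
    (hα_deriv : ∀ k, |deriv α k| ≤ C₀ * (1 + |k|) ^ (m - 1))
    (hα_lower : ∀ k, K ≤ |k| → a * |k| ^ m ≤ α k)
    (hα_upper : ∀ k, K ≤ |k| → α k ≤ b * |k| ^ m)
    (FT : FourierL2)
    (Mop : (ℝ → ℂ) → ℝ → ℂ)
    (hM : IsMult FT (fun k => (α k : ℂ)) (HmMem FT m) Mop)
    (f : ℝ → ℝ) (hf : ContDiff ℝ 1 f) (hf0 : f 0 = 0) (hf'0 : deriv f 0 = 0)
    (c : ℝ) (hc : 1 < c)
    (uc : ℝ → ℝ) (huc_cont : Continuous uc)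
    (huc_mem : HmMem FT m (fun x => (uc x : ℂ)))
    (huc_decay : Tendsto uc (cocompact ℝ) (nhds 0))
    (huc_eq : (fun x => Mop (fun y => (uc y : ℂ)) x + (1 - 1/c : ℂ) * (uc x : ℂ)
        - (1/c : ℂ) * (f (uc x) : ℂ)) =ᵐ[volume] 0)
    (Em : ℝ → (ℝ → ℂ) → ℝ → ℂ)
    (hEm : ∀ lam : ℝ, 0 < lam → IsMult FT
        (fun k => (lam : ℂ) / (lam - Complex.I * c * k)) (fun u => MemLp u 2 volume) (Em lam))
    :
    ∃ lam₀ C : ℝ, 0 < lam₀ ∧ 0 < C ∧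
      ∀ lam : ℝ, 0 < lam → lam < lam₀ →
      ∀ z : ℂ, z.re ≤ (1/2) * (1 - 1/c) →
      ∀ u v : ℝ → ℂ, HmMem FT m u → MemLp v 2 volume →
        (fun x => Abbm Mop Em f uc c lam u x - z * u x) =ᵐ[volume] v →
        HmHalfNorm FT m u ≤ C * (L2eNorm f uc u + L2norm v) := by
  obtain ⟨B, hB0, hB⟩ := deriv_comp_bound hf huc_cont huc_decay
  obtain ⟨Aα, hAα⟩ := (isCompact_Icc (a := -K) (b := K)).exists_bound_of_continuousOn
      hα_smooth.continuous.continuousOn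
  have hc0 : (0:ℝ) < c := lt_trans one_pos hc
  have hc1 : 1/c < 1 := (div_lt_one hc0).mpr hc
  have hicc0 : 0 < 1/c := by positivity
  have hm0 : (0:ℝ) ≤ m := le_trans zero_le_one hm
  set δ : ℝ := (1 - 1/c)/2 with hδdef
  have hδ : 0 < δ := by rw [hδdef]; linarith
  have hKm0 : (0:ℝ) ≤ K ^ m := Real.rpow_nonneg hK.le m
  set D : ℝ := (1 + K ^ m) * (2/δ)^2 + (1/a) * (4/δ) with hDdef
  have hD : 0 < D := by
    rw [hDdef]
    have h1 : 0 < (2/δ)^2 := by positivity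
    have h2 : 0 < (1/a) * (4/δ) := by positivity
    nlinarith [mul_pos (show (0:ℝ) < 1 + K^m by linarith) h1]
  clear_value δ D
  refine ⟨1, Real.sqrt D, one_pos, Real.sqrt_pos.mpr hD, ?_⟩
  intro lam hlam _ z hz u v hu hv heq
  have hu2 := hu.1
  -- the functions g = f'(u_c)·u and w = (1+f'(u_c))·u
  set gg : ℝ → ℂ := fun x => (Complex.ofReal (deriv f (uc x))) * u x with hg_def
  set w : ℝ → ℂ := fun y => (1 + Complex.ofReal (deriv f (uc y))) * u y with hw_def
  have hdc : Continuous fun x : ℝ => Complex.ofReal (deriv f (uc x)) :=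
    Complex.continuous_ofReal.comp ((hf.continuous_deriv le_rfl).comp huc_cont)
  have hg_mem : MemLp gg 2 volume := by
    refine MemLp.of_le (hu2.const_smul ((B : ℝ) : ℂ))
      (hdc.aestronglyMeasurable.mul hu2.aestronglyMeasurable) ?_
    filter_upwards with x
    have h2 : ‖((B:ℝ):ℂ) • u x‖ = B * ‖u x‖ := by
      rw [norm_smul, Complex.norm_real, Real.norm_eq_abs, abs_of_nonneg hB0]
    have h3 : ‖gg x‖ = |deriv f (uc x)| * ‖u x‖ := by
      rw [hg_def]
      simp only [norm_mul, Complex.norm_real, Real.norm_eq_abs]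
    rw [Pi.smul_apply, h2, h3]
    exact mul_le_mul_of_nonneg_right (hB x) (norm_nonneg _)
  have hwug : w = u + gg := by
    funext y
    simp only [hw_def, hg_def, Pi.add_apply]
    ring
  have hw_mem : MemLp w 2 volume := by rw [hwug]; exact hu2.add hg_mem
  have hMuP := hM u hu
  have hMu_mem := hMuP.1
  have hEwP := hEm lam hlam w hw_mem
  have hEw_mem := hEwP.1
  set U := hu2.toLp u with hU_def
  set G := hg_mem.toLp gg with hG_def
  set Wl := hw_mem.toLp w with hW_def
  set MU := hMu_mem.toLp (Mop u) with hMU_def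
  set EWl := hEw_mem.toLp (Em lam w) with hEW_def
  set V := hv.toLp v with hV_def
  -- Fourier side
  set uh := FT.toFun u with huh_def
  have huh_mem : MemLp uh 2 volume := FT.memLp u hu2
  set gh := FT.toFun gg with hgh_def
  have hgh_mem : MemLp gh 2 volume := FT.memLp gg hg_mem
  set Uh := huh_mem.toLp uh with hUh_def
  have hFiU : FTiso FT U = Uh := FTiso_toLp FT hu2
  set β : ℝ → ℂ := fun k => (lam : ℂ) / (lam - Complex.I * c * k) with hβ_def
  have hden : ∀ k : ℝ, ((lam : ℂ) - Complex.I * c * k).re = lam := by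
    intro k
    simp [Complex.sub_re, Complex.mul_re, Complex.mul_im]
  have hden_norm : ∀ k : ℝ, (lam:ℝ) ≤ ‖(lam : ℂ) - Complex.I * c * k‖ := by
    intro k
    calc (lam:ℝ) = |((lam : ℂ) - Complex.I * c * k).re| := by rw [hden k, abs_of_pos hlam]
      _ ≤ ‖(lam : ℂ) - Complex.I * c * k‖ := Complex.abs_re_le_norm _
      _ = ‖(lam : ℂ) - Complex.I * c * k‖ := rfl
  have hβ_bound : ∀ k, ‖β k‖ ≤ 1 := by
    intro k
    rw [hβ_def]
    simp only
    rw [norm_div]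
    apply div_le_one_of_le₀ _ (norm_nonneg _)
    calc ‖((lam:ℝ):ℂ)‖ = |lam| := by rw [Complex.norm_real, Real.norm_eq_abs]
      _ = lam := abs_of_pos hlam
      _ ≤ ‖(lam : ℂ) - Complex.I * c * k‖ := hden_norm k
  have hβ_re : ∀ k, 0 ≤ (β k).re := by
    intro k
    rw [hβ_def]
    simp only
    rw [Complex.div_re, Complex.ofReal_re, Complex.ofReal_im, hden k]
    simp only [zero_mul, zero_div, add_zero]
    exact div_nonneg (mul_self_nonneg lam) (Complex.normSq_nonneg _)
  have hβ_cont : Continuous β := by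
    rw [hβ_def]
    apply Continuous.div continuous_const (by continuity)
    intro k h
    have h2 := congrArg Complex.re h
    rw [hden k] at h2
    simp only [Complex.zero_re] at h2
    exact absurd h2 (ne_of_gt hlam)
  have hP1_mem : MemLp (fun k => β k * uh k) 2 volume :=
    MemLp.of_le huh_mem (hβ_cont.aestronglyMeasurable.mul huh_mem.aestronglyMeasurable)
      (Filter.Eventually.of_forall fun k => by
        rw [norm_mul]
        calc ‖β k‖ * ‖uh k‖ ≤ 1 * ‖uh k‖ :=
              mul_le_mul_of_nonneg_right (hβ_bound k) (norm_nonneg _)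
          _ = ‖uh k‖ := one_mul _)
  have hP2_mem : MemLp (fun k => β k * gh k) 2 volume :=
    MemLp.of_le hgh_mem (hβ_cont.aestronglyMeasurable.mul hgh_mem.aestronglyMeasurable)
      (Filter.Eventually.of_forall fun k => by
        rw [norm_mul]
        calc ‖β k‖ * ‖gh k‖ ≤ 1 * ‖gh k‖ :=
              mul_le_mul_of_nonneg_right (hβ_bound k) (norm_nonneg _)
          _ = ‖gh k‖ := one_mul _)
  set P1 := hP1_mem.toLp _ with hP1_def
  set P2 := hP2_mem.toLp _ with hP2_def
  set sc : ℂ := (1/c : ℂ) with hsc_def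
  have hAe : (fun x => Mop u x + u x - sc * (w x - Em lam w x) - z * u x) =ᵐ[volume] v := heq
  have hEqLp : MU + U - sc • (Wl - EWl) - z • U = V := by
    apply Lp.ext
    have c1 : ⇑(MU + U - sc • (Wl - EWl) - z • U) =ᵐ[volume]
        fun x => Mop u x + u x - sc * (w x - Em lam w x) - z * u x := by
      filter_upwards [Lp.coeFn_sub (MU + U - sc • (Wl - EWl)) (z • U),
        Lp.coeFn_sub (MU + U) (sc • (Wl - EWl)), Lp.coeFn_add MU U,
        Lp.coeFn_smul sc (Wl - EWl), Lp.coeFn_sub Wl EWl, Lp.coeFn_smul z U,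
        hMu_mem.coeFn_toLp, hu2.coeFn_toLp, hw_mem.coeFn_toLp, hEw_mem.coeFn_toLp]
        with x a1 a2 a3 a4 a5 a6 b1 b2 b3 b4
      simp only [Pi.add_apply, Pi.sub_apply, Pi.smul_apply, smul_eq_mul] at a1 a2 a3 a4 a5 a6
      rw [a1, a2, a3, a4, a5, a6, b1, b2, b3, b4]
    exact c1.trans (hAe.trans hv.coeFn_toLp.symm)
  have hinner : (inner ℂ U V : ℂ) =
      inner ℂ U MU + inner ℂ U U - sc * (inner ℂ U Wl - inner ℂ U EWl) - z * inner ℂ U U := by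
    rw [← hEqLp, inner_sub_right, inner_sub_right, inner_add_right, inner_smul_right,
      inner_smul_right, inner_sub_right]
  set N := ‖U‖ with hN_def
  have hN0 : 0 ≤ N := hN_def ▸ norm_nonneg U
  have hUU : (inner ℂ U U : ℂ) = ((N^2 : ℝ) : ℂ) := by
    rw [inner_self_eq_norm_sq_to_K]
    norm_cast
  -- integrability facts
  have hXk : ∀ k : ℝ, |k| ^ m ≤ (1 + |k|) ^ m := fun k =>
    Real.rpow_le_rpow (abs_nonneg k) (by linarith [abs_nonneg k]) hm0
  have hX1 : ∀ k : ℝ, 1 ≤ (1 + |k|) ^ m := fun k => by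
    calc (1:ℝ) = 1 ^ m := (Real.one_rpow m).symm
      _ ≤ (1 + |k|) ^ m := Real.rpow_le_rpow zero_le_one (by linarith [abs_nonneg k]) hm0
  have h2m_int : Integrable (fun k => ((1 + |k|) ^ m)^2 * ‖uh k‖^2) volume := by
    apply (normsq_integrable hu.2).congr
    filter_upwards with k
    rw [norm_smul, Real.norm_eq_abs,
      abs_of_nonneg (Real.rpow_nonneg (by linarith [abs_nonneg k]) m), mul_pow]
  have hnormsq_aesm : AEStronglyMeasurable (fun k => ‖uh k‖^2) volume :=
    (huh_mem.aestronglyMeasurable.norm.mul huh_mem.aestronglyMeasurable.norm).congr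
      (Filter.Eventually.of_forall fun k => (pow_two ‖uh k‖).symm)
  have habs_m_cont : Continuous fun k : ℝ => |k| ^ m :=
    continuous_abs.rpow_const (fun k => Or.inr hm0)
  have h1m_int : Integrable (fun k => (1 + |k| ^ m) * ‖uh k‖ ^ 2) volume := by
    refine Integrable.mono (h2m_int.const_mul 2)
      (((continuous_const.add habs_m_cont).aestronglyMeasurable).mul hnormsq_aesm) ?_
    filter_upwards with k
    have e0 : (0:ℝ) ≤ |k| ^ m := Real.rpow_nonneg (abs_nonneg k) m
    have e1 := hX1 k
    have e2 := hXk k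
    have e3 := sq_nonneg ‖uh k‖
    rw [Real.norm_eq_abs, Real.norm_eq_abs,
      abs_of_nonneg (mul_nonneg (by linarith : (0:ℝ) ≤ 1 + |k| ^ m) e3),
      abs_of_nonneg (mul_nonneg (by norm_num : (0:ℝ) ≤ 2) (mul_nonneg (sq_nonneg _) e3))]
    exact pt_bound1 e0 e1 e2 e3
  set Jα : ℝ := ∫ k : ℝ, α k * ‖uh k‖ ^ 2 with hJα_def
  clear_value Jα
  have hαb : ∀ k, α k ≤ (max Aα 0 + b) * (1 + |k| ^ m) := by
    intro k
    have e0 : (0:ℝ) ≤ |k| ^ m := Real.rpow_nonneg (abs_nonneg k) m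
    have emax : 0 ≤ max Aα 0 := le_max_right Aα 0
    rcases le_or_gt |k| K with h | h
    · have h1 : α k ≤ Aα := by
        have h2 := hAα k (by
          constructor
          · linarith [(abs_le.mp h).1]
          · linarith [(abs_le.mp h).2])
        rw [Real.norm_eq_abs] at h2
        exact le_trans (le_abs_self _) h2
      have h3 : Aα ≤ max Aα 0 := le_max_left Aα 0
      exact ab_case1 (le_trans h1 h3) emax hb e0
    · exact ab_case2 (hα_upper k h.le) emax hb e0
  have hα_aesm : AEStronglyMeasurable (fun k => α k * ‖uh k‖^2) volume :=
    (hα_smooth.continuous.aestronglyMeasurable).mul hnormsq_aesm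
  have hJα_int : Integrable (fun k => α k * ‖uh k‖ ^ 2) volume := by
    refine Integrable.mono (h1m_int.const_mul (max Aα 0 + b)) hα_aesm ?_
    filter_upwards with k
    have e0 : (0:ℝ) ≤ |k| ^ m := Real.rpow_nonneg (abs_nonneg k) m
    have e3 := sq_nonneg ‖uh k‖
    have emax : 0 ≤ max Aα 0 := le_max_right Aα 0
    rw [Real.norm_eq_abs, Real.norm_eq_abs, abs_of_nonneg (mul_nonneg (hα_nonneg k) e3),
      abs_of_nonneg (mul_nonneg (by linarith : (0:ℝ) ≤ max Aα 0 + b)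
        (mul_nonneg (by linarith : (0:ℝ) ≤ 1 + |k| ^ m) e3))]
    exact pt_bound2 (hα_nonneg k) e3 (by linarith) (hαb k)
  have hJα_nonneg : 0 ≤ Jα := by
    rw [hJα_def]
    exact integral_nonneg fun k => mul_nonneg (hα_nonneg k) (sq_nonneg _)
  have hUMU : (inner ℂ U MU : ℂ) = ((Jα : ℝ) : ℂ) := by
    rw [← LinearIsometry.inner_map_map (FTiso FT) U MU, hFiU, hMU_def, FTiso_toLp FT hMu_mem,
      hUh_def, inner_toLp]
    rw [show ((Jα : ℝ) : ℂ) = Complex.ofRealCLM Jα from rfl, hJα_def,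
      ← ContinuousLinearMap.integral_comp_comm _ hJα_int]
    apply integral_congr_ae
    filter_upwards [hMuP.2] with k hk
    rw [hk]
    simp only [Complex.ofRealCLM_apply]
    rw [show (starRingEnd ℂ) (uh k) * ((α k : ℂ) * uh k)
        = (α k : ℂ) * (uh k * (starRingEnd ℂ) (uh k)) from by ring, Complex.mul_conj]
    rw [Complex.normSq_eq_norm_sq]
    push_cast
    ring
  have hWUG : Wl = U + G := by
    rw [hW_def, hU_def, hG_def, ← MemLp.toLp_add hu2 hg_mem]
    exact MemLp.toLp_congr _ _ (by rw [hwug])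
  have hUW : (inner ℂ U Wl : ℂ) = inner ℂ U U + inner ℂ U G := by
    rw [hWUG, inner_add_right]
  have hwhat : FT.toFun w =ᵐ[volume] uh + gh := by
    rw [hwug]
    exact FT.map_add u gg hu2 hg_mem
  have hFiEW : FTiso FT EWl = P1 + P2 := by
    rw [hEW_def, FTiso_toLp FT hEw_mem, hP1_def, hP2_def, ← MemLp.toLp_add hP1_mem hP2_mem]
    apply MemLp.toLp_congr
    calc FT.toFun (Em lam w) =ᵐ[volume] fun k => β k * FT.toFun w k := hEwP.2
      _ =ᵐ[volume] (fun k => β k * uh k) + fun k => β k * gh k := by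
        filter_upwards [hwhat] with k hk
        simp only [Pi.add_apply]
        rw [hk, Pi.add_apply, mul_add]
  have hUEW : (inner ℂ U EWl : ℂ) = inner ℂ Uh P1 + inner ℂ Uh P2 := by
    rw [← LinearIsometry.inner_map_map (FTiso FT) U EWl, hFiU, hFiEW, inner_add_right]
  have hP1int : Integrable (fun k => (starRingEnd ℂ) (uh k) * (β k * uh k)) volume := by
    refine Integrable.mono (normsq_integrable huh_mem)
      ((Complex.continuous_conj.comp_aestronglyMeasurable huh_mem.aestronglyMeasurable).mul
        (hβ_cont.aestronglyMeasurable.mul huh_mem.aestronglyMeasurable)) ?_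
    filter_upwards with k
    rw [norm_mul, norm_mul, RCLike.norm_conj, Real.norm_eq_abs, abs_of_nonneg (sq_nonneg _)]
    have e1 := hβ_bound k
    have e2 := norm_nonneg (uh k)
    nlinarith
  have hreP1 : 0 ≤ (inner ℂ Uh P1 : ℂ).re := by
    rw [hUh_def, hP1_def, inner_toLp, complex_re_integral hP1int]
    apply integral_nonneg
    intro k
    show 0 ≤ ((starRingEnd ℂ) (uh k) * (β k * uh k)).re
    rw [show (starRingEnd ℂ) (uh k) * (β k * uh k)
        = β k * ((Complex.normSq (uh k) : ℝ) : ℂ) from by rw [← Complex.mul_conj]; ring]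
    rw [Complex.mul_re, Complex.ofReal_re, Complex.ofReal_im, mul_zero, sub_zero]
    exact mul_nonneg (hβ_re k) (Complex.normSq_nonneg _)
  have hUhN : ‖Uh‖ = N := by rw [← hFiU]; exact (FTiso FT).norm_map U
  have hP2G : ‖P2‖ ≤ ‖G‖ := by
    rw [hP2_def, Lp.norm_toLp, hG_def, Lp.norm_toLp]
    have h1 : eLpNorm (fun k => β k * gh k) 2 volume ≤ eLpNorm gh 2 volume :=
      eLpNorm_mono_ae (Filter.Eventually.of_forall fun k => by
        rw [norm_mul]
        calc ‖β k‖ * ‖gh k‖ ≤ 1 * ‖gh k‖ :=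
              mul_le_mul_of_nonneg_right (hβ_bound k) (norm_nonneg _)
          _ = ‖gh k‖ := one_mul _)
    have h2 : eLpNorm gh 2 volume = eLpNorm gg 2 volume := FT.plancherel gg hg_mem
    exact ENNReal.toReal_mono hg_mem.2.ne (h2 ▸ h1)
  have hA1 : (inner ℂ U G : ℂ).re ≤ N * ‖G‖ :=
    le_trans (Complex.re_le_norm _) (by
      exact norm_inner_le_norm U G)
  have hA3 : -(inner ℂ Uh P2 : ℂ).re ≤ N * ‖G‖ := by
    have h1 : ‖(inner ℂ Uh P2 : ℂ)‖ ≤ N * ‖G‖ := by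
      calc ‖(inner ℂ Uh P2 : ℂ)‖ ≤ ‖Uh‖ * ‖P2‖ := norm_inner_le_norm _ _
        _ ≤ N * ‖G‖ := by rw [hUhN]; exact mul_le_mul_of_nonneg_left hP2G hN0
    have h2 : -(inner ℂ Uh P2 : ℂ).re ≤ ‖(inner ℂ Uh P2 : ℂ)‖ := by
      calc -(inner ℂ Uh P2 : ℂ).re ≤ |(inner ℂ Uh P2 : ℂ).re| := neg_le_abs _
        _ ≤ ‖(inner ℂ Uh P2 : ℂ)‖ := Complex.abs_re_le_norm _
        _ = ‖(inner ℂ Uh P2 : ℂ)‖ := rfl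
    linarith
  have hA4 : (inner ℂ U V : ℂ).re ≤ N * ‖V‖ :=
    le_trans (Complex.re_le_norm _) (by
      exact norm_inner_le_norm U V)
  -- extract the real part of the inner product identity
  rw [hUW, hUEW, hUMU, hUU] at hinner
  have hscre : sc = ((1/c : ℝ) : ℂ) := by rw [hsc_def]; push_cast; ring
  rw [hscre] at hinner
  have hre := congrArg Complex.re hinner
  rw [re_formula] at hre
  have hGnn : 0 ≤ ‖G‖ := norm_nonneg _
  have hVnn : 0 ≤ ‖V‖ := norm_nonneg _
  have hzδ : z.re ≤ δ := by rw [hδdef]; linarith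
  obtain ⟨hJle, hN2⟩ := key_lemma hicc0 hc1 hδ (by rw [hδdef]; ring) hzδ hN0 hGnn hVnn
    hJα_nonneg hre hA1 hreP1 hA3 hA4
  set Q := ‖G‖ + ‖V‖ with hQ_def
  have hQ0 : 0 ≤ Q := by rw [hQ_def]; positivity
  have hNhat : ∫ k : ℝ, ‖uh k‖^2 = N^2 := by
    have h := norm_toLp_sq huh_mem
    rw [← hUh_def, hUhN] at h
    exact h.symm
  have hsplit : ∫ k : ℝ, (1 + |k|^m) * ‖uh k‖^2 ≤ (1 + K^m)*N^2 + (1/a)*Jα := by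
    have hmono : ∫ k : ℝ, (1 + |k|^m)*‖uh k‖^2
        ≤ ∫ k : ℝ, ((1+K^m)*‖uh k‖^2 + (1/a)*(α k*‖uh k‖^2)) := by
      apply integral_mono h1m_int (((normsq_integrable huh_mem).const_mul _).add
        (hJα_int.const_mul _))
      intro k
      show (1 + |k|^m) * ‖uh k‖^2 ≤ (1+K^m)*‖uh k‖^2 + (1/a)*(α k*‖uh k‖^2)
      have e0 : (0:ℝ) ≤ |k|^m := Real.rpow_nonneg (abs_nonneg k) m
      have e3 := sq_nonneg ‖uh k‖
      rcases le_or_gt |k| K with h | h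
      · have h1 : |k|^m ≤ K^m := Real.rpow_le_rpow (abs_nonneg k) h hm0
        have h2 : 0 ≤ (1/a)*(α k * ‖uh k‖^2) :=
          mul_nonneg (by positivity) (mul_nonneg (hα_nonneg k) e3)
        exact pt_bound3a h1 e3 h2
      · exact pt_bound3b ha (hα_lower k h.le) e3 hKm0
    rw [integral_add ((normsq_integrable huh_mem).const_mul _) (hJα_int.const_mul _),
      integral_const_mul, integral_const_mul, hNhat, ← hJα_def] at hmono
    exact hmono
  have hfinal : ∫ k : ℝ, (1 + |k|^m) * ‖uh k‖^2 ≤ D * Q^2 := by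
    calc ∫ k : ℝ, (1 + |k|^m) * ‖uh k‖^2 ≤ (1 + K^m)*N^2 + (1/a)*Jα := hsplit
      _ ≤ (1+K^m)*((2/δ)^2*Q^2) + (1/a)*((4/δ)*Q^2) := by
          apply add_le_add
          · exact mul_le_mul_of_nonneg_left hN2 (by linarith)
          · exact mul_le_mul_of_nonneg_left hJle (by positivity)
      _ = D * Q^2 := by rw [hDdef]; ring
  have hGnorm : ‖G‖ = L2eNorm f uc u := by
    rw [L2eNorm]
    have h1 : ∫ x : ℝ, (deriv f (uc x))^2 * ‖u x‖^2 = ∫ x : ℝ, ‖gg x‖^2 := by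
      apply integral_congr_ae
      filter_upwards with x
      rw [hg_def]
      simp only [norm_mul, Complex.norm_real, Real.norm_eq_abs, mul_pow, sq_abs]
    rw [h1, ← norm_toLp_sq hg_mem, ← hG_def, Real.sqrt_sq (norm_nonneg G)]
  have hVnorm : ‖V‖ = L2norm v := by rw [hV_def, Lp.norm_toLp]; rfl
  calc HmHalfNorm FT m u = Real.sqrt (∫ k : ℝ, (1 + |k|^m) * ‖uh k‖^2) := by
        rw [HmHalfNorm, huh_def]
    _ ≤ Real.sqrt (D * Q^2) := Real.sqrt_le_sqrt hfinal
    _ = Real.sqrt D * Q := by rw [Real.sqrt_mul hD.le, Real.sqrt_sq hQ0]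
    _ = Real.sqrt D * (L2eNorm f uc u + L2norm v) := by rw [hQ_def, hGnorm, hVnorm]
end
end

section
/- There exists Λ > 0 such that for every λ > Λ, the operator A^λ has no eigenvalues in the closed left half-plane: there exist no k ∈ ℂ with Re k ≤ 0 and nonzero u ∈ H^m(ℝ) satisfying A^λ u = k u. -/
open MeasureTheory Filter Set

noncomputable section

set_option maxHeartbeats 1000000 in
private lemma key_ineq (c B R lam ξ αv s t : ℝ) (hc : 0 < c) (hB : 0 < B) (hR : 0 < R)
    (hα : 0 ≤ αv) (hs : s ≤ 0) (hlam : 1 + 3*B*R + c*R < lam)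
    (hcase : R ≤ |ξ| → 2*B + B^2/c ≤ αv) :
    4*B^2*c^2*ξ^2 ≤ (lam*(s-c) + c*ξ*t)^2 + (lam*t + c*ξ*(αv + c - s))^2 := by
  have hq : 0 ≤ |ξ| := abs_nonneg ξ
  have hq2 : |ξ|^2 = ξ^2 := sq_abs ξ
  have hlam0 : 0 < lam := by nlinarith [mul_pos hB hR, mul_pos hc hR]
  set X := lam*(s-c) + c*ξ*t with hX
  set Y := lam*t + c*ξ*(αv + c - s) with hY
  set q := |ξ| with hqdef
  have hDsq : 4*B^2*c^2*ξ^2*(c^2*ξ^2 + lam^2) ≤ (c*ξ*Y - lam*X)^2 := by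
    have hD : c*ξ*Y - lam*X = c^2*ξ^2*(αv + c - s) + lam^2*(c - s) := by
      rw [hX, hY]; ring
    rw [hD, ← hq2]
    rcases le_or_gt R q with h | h
    · have hε := hcase h
      have h3 : c^2*q^2*(B^2/c) = B^2*c*q^2 := by field_simp
      have hDlb : 2*B*c*q*(c*q + lam) ≤ c^2*q^2*(αv + c - s) + lam^2*(c - s) := by
        have h1 : c^2*q^2*(2*B + B^2/c + c) ≤ c^2*q^2*(αv + c - s) := by
          have h0 : 2*B + B^2/c + c ≤ αv + c - s := by linarith
          exact mul_le_mul_of_nonneg_left h0 (by positivity)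
        have h2 : lam^2*c ≤ lam^2*(c - s) := by
          have : c ≤ c - s := by linarith
          exact mul_le_mul_of_nonneg_left this (sq_nonneg lam)
        nlinarith [mul_nonneg hc.le (sq_nonneg (B*q - lam)),
          mul_nonneg (mul_nonneg (mul_nonneg hc.le hc.le) hc.le) (sq_nonneg q)]
      have hlb0 : 0 ≤ 2*B*c*q*(c*q + lam) := by positivity
      have hsq : (2*B*c*q*(c*q + lam))^2 ≤ (c^2*q^2*(αv + c - s) + lam^2*(c - s))^2 :=
        pow_le_pow_left₀ hlb0 hDlb 2
      have hexp : 4*B^2*c^2*q^2*(c^2*q^2 + lam^2) ≤ (2*B*c*q*(c*q + lam))^2 := by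
        have h2 : c^2*q^2 + lam^2 ≤ (c*q + lam)^2 := by
          nlinarith [mul_nonneg (mul_nonneg hc.le hq) hlam0.le]
        nlinarith [mul_le_mul_of_nonneg_left h2 (by positivity : (0:ℝ) ≤ 4*B^2*c^2*q^2)]
      linarith
    · have hq2R : q^2 ≤ R^2 := by nlinarith
      have hl1 : 3*B*R ≤ lam := by nlinarith [mul_pos hc hR]
      have hl2 : c*R ≤ lam := by nlinarith [mul_pos hB hR]
      have hDlb : c*lam^2 ≤ c^2*q^2*(αv + c - s) + lam^2*(c - s) := by
        have h1 : 0 ≤ c^2*q^2*(αv + c - s) := by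
          have : 0 ≤ αv + c - s := by linarith
          positivity
        have h2 : lam^2*c ≤ lam^2*(c - s) := by
          have : c ≤ c - s := by linarith
          exact mul_le_mul_of_nonneg_left this (sq_nonneg lam)
        linarith
      have hDlb0 : 0 ≤ c*lam^2 := by positivity
      have hsq2 : (c*lam^2)^2 ≤ (c^2*q^2*(αv + c - s) + lam^2*(c - s))^2 :=
        pow_le_pow_left₀ hDlb0 hDlb 2
      have hq4 : q^2*q^2 ≤ R^2*R^2 :=
        mul_le_mul hq2R hq2R (sq_nonneg q) (sq_nonneg R)
      have hmono : 4*B^2*c^2*q^2*(c^2*q^2 + lam^2) ≤ 4*B^2*c^2*R^2*(c^2*R^2 + lam^2) := by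
        have m1 : 4*B^2*c^2*c^2*(q^2*q^2) ≤ 4*B^2*c^2*c^2*(R^2*R^2) :=
          mul_le_mul_of_nonneg_left hq4 (by positivity)
        have m2 : (4*B^2*c^2*lam^2)*q^2 ≤ (4*B^2*c^2*lam^2)*R^2 :=
          mul_le_mul_of_nonneg_left hq2R (by positivity)
        nlinarith [m1, m2]
      have hfin : 4*B^2*c^2*R^2*(c^2*R^2 + lam^2) ≤ (c*lam^2)^2 := by
        have h9 : 9*B^2*R^2 ≤ lam^2 := by
          nlinarith [mul_le_mul hl1 hl1 (by positivity : (0:ℝ) ≤ 3*B*R) hlam0.le]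
        have hcR2 : c^2*R^2 ≤ lam^2 := by
          nlinarith [mul_le_mul hl2 hl2 (by positivity : (0:ℝ) ≤ c*R) hlam0.le]
        have t1 : (4*B^2*R^2)*(c^2*R^2) ≤ (4*B^2*R^2)*lam^2 :=
          mul_le_mul_of_nonneg_left hcR2 (by positivity)
        have t2 : (9*B^2*R^2)*lam^2 ≤ lam^2*lam^2 :=
          mul_le_mul_of_nonneg_right h9 (sq_nonneg lam)
        have h8 : 4*B^2*R^2*(c^2*R^2) + 4*B^2*R^2*lam^2 ≤ lam^2*lam^2 := by nlinarith
        nlinarith [mul_le_mul_of_nonneg_left h8 (sq_nonneg c)]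
      linarith
  have hpos : 0 < c^2*ξ^2 + lam^2 := by positivity
  have hfin2 : (c^2*ξ^2 + lam^2) * (4*B^2*c^2*ξ^2) ≤ (c^2*ξ^2 + lam^2) * (X^2 + Y^2) := by
    have hid : (c^2*ξ^2 + lam^2)*(X^2 + Y^2) = (c*ξ*Y - lam*X)^2 + (lam*Y + c*ξ*X)^2 := by ring
    rw [hid]
    nlinarith [sq_nonneg (lam*Y + c*ξ*X), hDsq]
  exact le_of_mul_le_mul_left hfin2 hpos

private lemma bounded_of_cocompact {h : ℝ → ℝ} (hcont : Continuous h)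
    (htend : Tendsto h (cocompact ℝ) (nhds 0)) : ∃ B : ℝ, 0 < B ∧ ∀ x, |h x| ≤ B := by
  have hev : ∀ᶠ x in cocompact ℝ, dist (h x) 0 < 1 :=
    (Metric.tendsto_nhds.mp htend) 1 one_pos
  obtain ⟨S, hS, hSsub⟩ := mem_cocompact.mp hev
  obtain ⟨C, hC⟩ := hS.exists_bound_of_continuousOn hcont.continuousOn
  refine ⟨max C 1 + 1, by positivity, fun x => ?_⟩
  by_cases hx : x ∈ S
  · have := hC x hx
    rw [Real.norm_eq_abs] at this
    linarith [le_max_left C 1]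
  · have := hSsub hx
    simp only [Set.mem_setOf_eq, dist_zero_right, Real.norm_eq_abs] at this
    linarith [le_max_right C 1]

/-- The operator `L₀ = M + c - f'(u_c)` for the KDV type equation. -/
def L0kdv (Mop : (ℝ → ℂ) → ℝ → ℂ) (f uc : ℝ → ℝ) (c : ℝ) (u : ℝ → ℂ) : ℝ → ℂ :=
  fun x => Mop u x + (c : ℂ) * u x - Complex.ofReal (deriv f (uc x)) * u x

/-- The operator `A^λ u = c u + (c∂ₓ/(λ - c∂ₓ))(f'(u_c)u - M u)` for the KDV type
equation, where `Top` is the Fourier multiplier with symbol `ick/(λ - ick)`. -/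
def Akdv (Mop : (ℝ → ℂ) → ℝ → ℂ) (Top : (ℝ → ℂ) → ℝ → ℂ) (f uc : ℝ → ℝ) (c : ℝ)
    (u : ℝ → ℂ) : ℝ → ℂ :=
  fun x => (c : ℂ) * u x + Top (fun y => Complex.ofReal (deriv f (uc y)) * u y - Mop u y) x

private lemma FourierL2.congr (FT : FourierL2) {u v : ℝ → ℂ} (hu : MemLp u 2 volume)
    (hv : MemLp v 2 volume) (h : u =ᵐ[volume] v) :
    FT.toFun u =ᵐ[volume] FT.toFun v := by
  have hsub : MemLp (u - v) 2 volume := hu.sub hv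
  have h0 : eLpNorm (u - v) 2 volume = 0 := by
    have : u - v =ᵐ[volume] 0 := by
      filter_upwards [h] with x hx
      simp [Pi.sub_apply, hx]
    rw [eLpNorm_congr_ae this, eLpNorm_zero]
  have h1 : eLpNorm (FT.toFun (u - v)) 2 volume = 0 := by
    rw [FT.plancherel _ hsub, h0]
  have h2 : FT.toFun (u - v) =ᵐ[volume] 0 :=
    (eLpNorm_eq_zero_iff (FT.memLp _ hsub).aestronglyMeasurable (by norm_num)).mp h1
  have h3 := FT.map_add (u - v) v hsub hv
  rw [sub_add_cancel] at h3
  filter_upwards [h2, h3] with x hx2 hx3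
  rw [hx3, Pi.add_apply, hx2, Pi.zero_apply, zero_add]

/-- Lemma 4.1: there is `Λ > 0` such that for `λ > Λ` the KDV operator `A^λ` has no
eigenvalues in `{Re k ≤ 0}`. -/
theorem kdv_no_eigenvalue_large_lambda
    (m : ℝ) (hm : 1 ≤ m)
    (α : ℝ → ℝ) (a b C₀ K : ℝ)
    (ha : 0 < a) (hb : 0 < b) (hC₀ : 0 < C₀) (hK : 0 < K)
    (hα_nonneg : ∀ k, 0 ≤ α k) (hα_smooth : ContDiff ℝ 1 α)
    (hα_deriv : ∀ k, |deriv α k| ≤ C₀ * (1 + |k|) ^ (m - 1))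
    (hα_lower : ∀ k, K ≤ |k| → a * |k| ^ m ≤ α k)
    (hα_upper : ∀ k, K ≤ |k| → α k ≤ b * |k| ^ m)
    (FT : FourierL2)
    (Mop : (ℝ → ℂ) → ℝ → ℂ)
    (hM : IsMult FT (fun k => (α k : ℂ)) (HmMem FT m) Mop)
    (f : ℝ → ℝ) (hf : ContDiff ℝ 1 f) (hf0 : f 0 = 0) (hf'0 : deriv f 0 = 0)
    (c : ℝ) (hc : 0 < c)
    (uc : ℝ → ℝ) (huc_cont : Continuous uc)
    (huc_mem : HmMem FT m (fun x => (uc x : ℂ)))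
    (huc_decay : Tendsto uc (cocompact ℝ) (nhds 0))
    (huc_eq : (fun x => Mop (fun y => (uc y : ℂ)) x + (c : ℂ) * (uc x : ℂ)
        - (f (uc x) : ℂ)) =ᵐ[volume] 0)
    (Top : ℝ → (ℝ → ℂ) → ℝ → ℂ)
    (hTop : ∀ lam : ℝ, 0 < lam → IsMult FT
        (fun k => (Complex.I * c * k) / (lam - Complex.I * c * k))
        (fun u => MemLp u 2 volume) (Top lam))
    :
    ∃ Λ : ℝ, 0 < Λ ∧ ∀ lam : ℝ, Λ < lam →
      ¬ ∃ (k : ℂ) (u : ℝ → ℂ), k.re ≤ 0 ∧ HmMem FT m u ∧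
        ¬ u =ᵐ[volume] (0 : ℝ → ℂ) ∧
        Akdv Mop (Top lam) f uc c u =ᵐ[volume] fun x => k * u x := by
  -- boundedness of f'(u_c)
  have hd : Continuous fun x => deriv f (uc x) := (hf.continuous_deriv le_rfl).comp huc_cont
  have htend : Tendsto (fun x => deriv f (uc x)) (cocompact ℝ) (nhds 0) := by
    have h := ((hf.continuous_deriv le_rfl).tendsto 0).comp huc_decay
    rwa [hf'0] at h
  obtain ⟨B, hB, hBb⟩ := bounded_of_cocompact hd htend
  have hε : (0:ℝ) < 2*B + B^2/c := by positivity
  set ε : ℝ := 2*B + B^2/c with hεdef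
  set R : ℝ := max K ((ε/a) ^ (m⁻¹)) with hRdef
  have hR : 0 < R := lt_of_lt_of_le hK (le_max_left _ _)
  have hαR : ∀ ξ : ℝ, R ≤ |ξ| → ε ≤ α ξ := by
    intro ξ hξ
    have hm0 : m ≠ 0 := by intro h0; rw [h0] at hm; linarith
    have h1 : a * |ξ| ^ m ≤ α ξ := hα_lower ξ (le_trans (le_max_left _ _) hξ)
    have h2 : (ε/a) ^ (m⁻¹) ≤ R := le_max_right _ _
    have hea : (0:ℝ) ≤ ε/a := by positivity
    have h3 : ((ε/a) ^ (m⁻¹)) ^ m ≤ R ^ m :=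
      Real.rpow_le_rpow (Real.rpow_nonneg hea _) h2 (by linarith)
    have h4 : ((ε/a) ^ (m⁻¹)) ^ m = ε/a := by
      rw [← Real.rpow_mul hea, inv_mul_cancel₀ hm0, Real.rpow_one]
    have h5 : R ^ m ≤ |ξ| ^ m := Real.rpow_le_rpow hR.le hξ (by linarith)
    have h6 : ε/a ≤ |ξ| ^ m := by rw [← h4]; exact le_trans h3 h5
    have h7 : ε ≤ a * |ξ| ^ m := by
      rw [div_le_iff₀ ha] at h6; linarith [h6]
    linarith
  refine ⟨1 + 3*B*R + c*R, by positivity, ?_⟩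
  intro lam hlam
  rintro ⟨k, u, hk, huH, hune, heig⟩
  have hlam0 : 0 < lam := lt_trans (by positivity) hlam
  have hu2 : MemLp u 2 volume := huH.1
  set uhat := FT.toFun u with huhatdef
  set g : ℝ → ℂ := fun x => Complex.ofReal (deriv f (uc x)) * u x with hgdef
  have hg2 : MemLp g 2 volume := by
    refine MemLp.of_le (hu2.const_smul ((B:ℝ) : ℂ))
      (((Complex.continuous_ofReal.comp hd).aestronglyMeasurable).mul hu2.aestronglyMeasurable)
      (Eventually.of_forall fun x => ?_)
    rw [Pi.smul_apply, smul_eq_mul, norm_mul, norm_mul]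
    apply mul_le_mul_of_nonneg_right _ (norm_nonneg _)
    rw [Complex.norm_real, Real.norm_eq_abs, Complex.norm_real, Real.norm_eq_abs,
      abs_of_pos hB]
    exact hBb x
  have hMu1 : MemLp (Mop u) 2 volume := (hM u huH).1
  set w : ℝ → ℂ := fun y => Complex.ofReal (deriv f (uc y)) * u y - Mop u y with hwdef
  have hw2 : MemLp w 2 volume := hg2.sub hMu1
  have hT := hTop lam hlam0 w hw2
  -- the eigenvalue equation
  have heig' : Top lam w =ᵐ[volume] (k - (c:ℂ)) • u := by
    filter_upwards [heig] with x hx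
    simp only [Akdv] at hx
    rw [Pi.smul_apply, smul_eq_mul]
    linear_combination hx
  have h1 : FT.toFun (Top lam w) =ᵐ[volume] FT.toFun ((k - (c:ℂ)) • u) :=
    FT.congr hT.1 (hu2.const_smul _) heig'
  have h2 : FT.toFun ((k - (c:ℂ)) • u) =ᵐ[volume] (k - (c:ℂ)) • uhat := FT.map_smul _ u hu2
  have h3 := hT.2
  -- Fourier transform of w
  have h4 : FT.toFun w =ᵐ[volume] fun ξ => FT.toFun g ξ - (α ξ : ℂ) * uhat ξ := by
    have hwadd : w = g + ((-1 : ℂ) • Mop u) := by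
      funext y; simp [hwdef, hgdef, sub_eq_add_neg]
    have ha1 := FT.map_add g ((-1:ℂ) • Mop u) hg2 (hMu1.const_smul _)
    rw [← hwadd] at ha1
    have ha2 := FT.map_smul (-1 : ℂ) (Mop u) hMu1
    have ha3 := (hM u huH).2
    filter_upwards [ha1, ha2, ha3] with ξ e1 e2 e3
    rw [e1, Pi.add_apply, e2, Pi.smul_apply, smul_eq_mul, e3]
    ring
  -- the key pointwise identity
  have hkey : ∀ᵐ ξ : ℝ ∂volume,
      (Complex.I * c * ξ / (lam - Complex.I * c * ξ)) * (FT.toFun g ξ - (α ξ : ℂ) * uhat ξ)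
        = (k - (c:ℂ)) * uhat ξ := by
    filter_upwards [h1, h2, h3, h4] with ξ e1 e2 e3 e4
    rw [← e4, ← e3, e1, e2, Pi.smul_apply, smul_eq_mul]
  have hne0 : ∀ᵐ ξ : ℝ ∂volume, ξ ≠ 0 := by
    rw [MeasureTheory.ae_iff]
    have : {ξ : ℝ | ¬ ξ ≠ 0} = {0} := by ext ξ; simp
    rw [this]
    exact Real.volume_singleton
  -- pointwise bound
  have hbound : ∀ᵐ ξ : ℝ ∂volume, ‖(((2*B:ℝ):ℂ) • uhat) ξ‖ ≤ ‖FT.toFun g ξ‖ := by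
    filter_upwards [hkey, hne0] with ξ e hξ0
    have hden : ((lam:ℂ) - Complex.I * c * ξ) ≠ 0 := by
      intro hcon
      have hre := congrArg Complex.re hcon
      simp [Complex.sub_re, Complex.mul_re, Complex.mul_im, Complex.I_re, Complex.I_im,
        Complex.ofReal_re, Complex.ofReal_im] at hre
      linarith
    rw [div_mul_eq_mul_div, div_eq_iff hden] at e
    set Φ : ℂ := (k - (c:ℂ)) * ((lam:ℂ) - Complex.I * c * ξ)
        + Complex.I * c * ξ * (α ξ : ℂ) with hΦ
    have hmul : Complex.I * (c:ℂ) * (ξ:ℂ) * FT.toFun g ξ = Φ * uhat ξ := by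
      rw [hΦ]; linear_combination e
    have hnormI : ‖Complex.I * (c:ℂ) * (ξ:ℂ)‖ = c * |ξ| := by
      rw [norm_mul, norm_mul, Complex.norm_I,
        Complex.norm_real, Real.norm_eq_abs, Complex.norm_real, Real.norm_eq_abs,
        abs_of_pos hc, one_mul]
    have hΦre : Φ.re = lam*(k.re - c) + c*ξ*k.im := by
      rw [hΦ]
      simp [Complex.add_re, Complex.mul_re, Complex.mul_im, Complex.sub_re, Complex.sub_im,
        Complex.I_re, Complex.I_im, Complex.ofReal_re, Complex.ofReal_im]
      ring
    have hΦim : Φ.im = lam*k.im + c*ξ*(α ξ + c - k.re) := by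
      rw [hΦ]
      simp [Complex.add_im, Complex.mul_re, Complex.mul_im, Complex.sub_re, Complex.sub_im,
        Complex.I_re, Complex.I_im, Complex.ofReal_re, Complex.ofReal_im]
      ring
    have hΦnorm : 4*B^2*c^2*ξ^2 ≤ ‖Φ‖^2 := by
      have hsq : ‖Φ‖^2 = Φ.re^2 + Φ.im^2 := by
        rw [Complex.sq_norm, Complex.normSq_apply]; ring
      rw [hsq, hΦre, hΦim]
      exact key_ineq c B R lam ξ (α ξ) k.re k.im hc hB hR (hα_nonneg ξ) hk hlam
        (fun h => hαR ξ h)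
    have hn : (c * |ξ|) * ‖FT.toFun g ξ‖ = ‖Φ‖ * ‖uhat ξ‖ := by
      rw [← hnormI, ← norm_mul, hmul, norm_mul]
    have hΦge : 2*B*c*|ξ| ≤ ‖Φ‖ := by
      have habs : (2*B*c*|ξ|)^2 ≤ ‖Φ‖^2 := by
        calc (2*B*c*|ξ|)^2 = 4*B^2*c^2*ξ^2 := by rw [mul_pow, sq_abs]; ring
          _ ≤ ‖Φ‖^2 := hΦnorm
      exact (pow_le_pow_iff_left₀ (by positivity) (norm_nonneg Φ) two_ne_zero).mp habs
    have h2B : (c*|ξ|) * (2*B*‖uhat ξ‖) ≤ (c*|ξ|) * ‖FT.toFun g ξ‖ := by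
      have step : 2*B*c*|ξ| * ‖uhat ξ‖ ≤ ‖Φ‖ * ‖uhat ξ‖ :=
        mul_le_mul_of_nonneg_right hΦge (norm_nonneg _)
      calc (c*|ξ|) * (2*B*‖uhat ξ‖) = 2*B*c*|ξ| * ‖uhat ξ‖ := by ring
        _ ≤ ‖Φ‖ * ‖uhat ξ‖ := step
        _ = (c*|ξ|) * ‖FT.toFun g ξ‖ := hn.symm
    have hcξ : 0 < c*|ξ| := mul_pos hc (abs_pos.mpr hξ0)
    have hfin : 2*B*‖uhat ξ‖ ≤ ‖FT.toFun g ξ‖ := le_of_mul_le_mul_left h2B hcξ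
    rw [Pi.smul_apply, smul_eq_mul, norm_mul, Complex.norm_real, Real.norm_eq_abs,
      abs_of_pos (by positivity : (0:ℝ) < 2*B)]
    linarith
  -- L² endgame
  have e1 : eLpNorm (((2*B:ℝ):ℂ) • uhat) 2 volume ≤ eLpNorm (FT.toFun g) 2 volume :=
    eLpNorm_mono_ae hbound
  rw [eLpNorm_const_smul] at e1
  have e3 : eLpNorm g 2 volume ≤ eLpNorm (((B:ℝ):ℂ) • u) 2 volume := by
    apply eLpNorm_mono_ae
    refine Eventually.of_forall fun x => ?_
    rw [Pi.smul_apply, smul_eq_mul, norm_mul, norm_mul]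
    apply mul_le_mul_of_nonneg_right _ (norm_nonneg _)
    rw [Complex.norm_real, Real.norm_eq_abs, Complex.norm_real, Real.norm_eq_abs,
      abs_of_pos hB]
    exact hBb x
  rw [eLpNorm_const_smul] at e3
  have Pu := FT.plancherel u hu2
  have Pg := FT.plancherel g hg2
  have hN0 : eLpNorm u 2 volume ≠ 0 := fun h0 =>
    hune ((eLpNorm_eq_zero_iff hu2.aestronglyMeasurable (by norm_num)).mp h0)
  have hNt : eLpNorm u 2 volume ≠ ⊤ := hu2.2.ne
  have echain : (‖((2*B:ℝ):ℂ)‖₊ : ENNReal) * eLpNorm u 2 volume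
      ≤ (‖((B:ℝ):ℂ)‖₊ : ENNReal) * eLpNorm u 2 volume := by
    calc (‖((2*B:ℝ):ℂ)‖₊ : ENNReal) * eLpNorm u 2 volume
        = (‖((2*B:ℝ):ℂ)‖₊ : ENNReal) * eLpNorm uhat 2 volume := by rw [Pu]
      _ ≤ eLpNorm (FT.toFun g) 2 volume := e1
      _ = eLpNorm g 2 volume := Pg
      _ ≤ (‖((B:ℝ):ℂ)‖₊ : ENNReal) * eLpNorm u 2 volume := e3
  have hle : (‖((2*B:ℝ):ℂ)‖₊ : ENNReal) ≤ (‖((B:ℝ):ℂ)‖₊ : ENNReal) :=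
    (ENNReal.mul_le_mul_iff_left hN0 hNt).mp echain
  have hle2 : ‖((2*B:ℝ):ℂ)‖ ≤ ‖((B:ℝ):ℂ)‖ := by
    have := ENNReal.coe_le_coe.mp hle
    exact_mod_cast this
  rw [Complex.norm_real, Real.norm_eq_abs, Complex.norm_real, Real.norm_eq_abs,
    abs_of_pos hB, abs_of_pos (by positivity : (0:ℝ) < 2*B)] at hle2
  linarith
end
end
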